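/- arXiv:2401.10764 — 4 statements merged into one kernel-verified Lean document; each statement's English description precedes it below -/
import Mathlib

section
/- If the nonautonomous linear delay differential equation x'(t) = L(t)x_t admits an exponential dichotomy, then it is Hyers–Ulam stable: there exists κ > 0 such that for every δ > 0 and every continuously differentiable y : [0,∞) → ℝ^d (with continuous extension to [-r,∞)) satisfying sup_{t≥0} |y'(t) − L(t)y_t| ≤ δ, there exists a solution x of the equation on [0,∞) with sup_{t≥0} ‖x_t − y_t‖ ≤ κδ. -/
open Set

noncomputable section

/-- The Euclidean state space ℝ^d. -/
abbrev Rd (d : ℕ) : Type := EuclideanSpace ℝ (Fin d)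

/-- The phase space C = C([-r,0], ℝ^d) with the supremum norm. -/
abbrev Ph (d : ℕ) (r : ℝ) : Type := C(Set.Icc (-r) (0:ℝ), Rd d)

/-- The segment x_t ∈ C of a continuous function x : ℝ → ℝ^d, x_t(θ) = x(t+θ). -/
def seg (d : ℕ) (r : ℝ) (x : ℝ → Rd d) (hx : Continuous x) (t : ℝ) : Ph d r :=
  ⟨fun θ => x (t + θ.1), hx.comp (continuous_const.add continuous_subtype_val)⟩

/-- `x` is a solution of x'(t) = L(t)x_t on [s, ∞) (right-hand derivative at s). -/
def IsSol (d : ℕ) (r : ℝ) (L : ℝ → (Ph d r →L[ℝ] Rd d)) (s : ℝ)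
    (x : ℝ → Rd d) (hx : Continuous x) : Prop :=
  ∀ t, s ≤ t → HasDerivWithinAt x (L t (seg d r x hx t)) (Set.Ici s) t

/-- `T` is the solution operator family of x'(t) = L(t)x_t :
for every s ≥ 0 and φ ∈ C there is a solution x on [s,∞) with x_s = φ and x_t = T(t,s)φ. -/
def IsSolOp (d : ℕ) (r : ℝ) (L : ℝ → (Ph d r →L[ℝ] Rd d))
    (T : ℝ → ℝ → (Ph d r →L[ℝ] Ph d r)) : Prop :=
  ∀ s, 0 ≤ s → ∀ φ : Ph d r, ∃ (x : ℝ → Rd d) (hx : Continuous x),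
    IsSol d r L s x hx ∧ seg d r x hx s = φ ∧ ∀ t, s ≤ t → seg d r x hx t = T t s φ

/-- The evolution family property of the solution operators. -/
def Cocycle (d : ℕ) (r : ℝ) (T : ℝ → ℝ → (Ph d r →L[ℝ] Ph d r)) : Prop :=
  (∀ s, 0 ≤ s → T s s = ContinuousLinearMap.id ℝ (Ph d r)) ∧
  ∀ τ t s, 0 ≤ s → s ≤ t → t ≤ τ → T τ s = (T τ t).comp (T t s)

/-- Uniqueness of solutions with a given initial segment at time s. -/
def UniqueSol (d : ℕ) (r : ℝ) (L : ℝ → (Ph d r →L[ℝ] Rd d)) : Prop :=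
  ∀ s, 0 ≤ s → ∀ (x y : ℝ → Rd d) (hx : Continuous x) (hy : Continuous y),
    IsSol d r L s x hx → IsSol d r L s y hy → seg d r x hx s = seg d r y hy s →
    ∀ t, s - r ≤ t → x t = y t

/-- Eq. x'(t) = L(t)x_t is shadowable. -/
def Shadowable (d : ℕ) (r : ℝ) (L : ℝ → (Ph d r →L[ℝ] Rd d)) : Prop :=
  ∀ ε, 0 < ε → ∃ δ, 0 < δ ∧ ∀ (y yd : ℝ → Rd d) (hy : Continuous y),
    ContinuousOn yd (Set.Ici 0) →
    (∀ t, 0 ≤ t → HasDerivWithinAt y (yd t) (Set.Ici 0) t) →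
    (∀ t, 0 ≤ t → ‖yd t - L t (seg d r y hy t)‖ ≤ δ) →
    ∃ (x : ℝ → Rd d) (hx : Continuous x), IsSol d r L 0 x hx ∧
      ∀ t, 0 ≤ t → ‖seg d r x hx t - seg d r y hy t‖ ≤ ε

/-- Eq. x'(t) = L(t)x_t is Hyers–Ulam stable. -/
def HyersUlam (d : ℕ) (r : ℝ) (L : ℝ → (Ph d r →L[ℝ] Rd d)) : Prop :=
  ∃ κ, 0 < κ ∧ ∀ δ, 0 < δ → ∀ (y yd : ℝ → Rd d) (hy : Continuous y),
    ContinuousOn yd (Set.Ici 0) →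
    (∀ t, 0 ≤ t → HasDerivWithinAt y (yd t) (Set.Ici 0) t) →
    (∀ t, 0 ≤ t → ‖yd t - L t (seg d r y hy t)‖ ≤ δ) →
    ∃ (x : ℝ → Rd d) (hx : Continuous x), IsSol d r L 0 x hx ∧
      ∀ t, 0 ≤ t → ‖seg d r x hx t - seg d r y hy t‖ ≤ κ * δ

/-- The stable subspace 𝒮(s) = {φ ∈ C : sup_{t ≥ s} ‖T(t,s)φ‖ < ∞}. -/
def stableSub (d : ℕ) (r : ℝ) (T : ℝ → ℝ → (Ph d r →L[ℝ] Ph d r)) (s : ℝ) :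
    Submodule ℝ (Ph d r) where
  carrier := {φ | ∃ M, ∀ t, s ≤ t → ‖T t s φ‖ ≤ M}
  add_mem' := by
    rintro a b ⟨Ma, hMa⟩ ⟨Mb, hMb⟩
    refine ⟨Ma + Mb, fun t ht => ?_⟩
    calc ‖T t s (a + b)‖ = ‖T t s a + T t s b‖ := by rw [map_add]
    _ ≤ ‖T t s a‖ + ‖T t s b‖ := norm_add_le _ _
    _ ≤ Ma + Mb := add_le_add (hMa t ht) (hMb t ht)
  zero_mem' := ⟨0, fun t ht => by simp⟩
  smul_mem' := by
    rintro c a ⟨Ma, hMa⟩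
    refine ⟨‖c‖ * Ma, fun t ht => ?_⟩
    rw [map_smul]
    have h1 : ‖c • (T t s) a‖ = ‖c‖ * ‖(T t s) a‖ := @norm_smul ℝ (Ph d r) _ _ _ _ c _
    rw [h1]
    exact mul_le_mul_of_nonneg_left (hMa t ht) (norm_nonneg c)

/-- Eq. x'(t) = L(t)x_t admits an exponential dichotomy (with solution operators T). -/
def ExpDich (d : ℕ) (r : ℝ) (T : ℝ → ℝ → (Ph d r →L[ℝ] Ph d r)) : Prop :=
  ∃ (P : ℝ → (Ph d r →L[ℝ] Ph d r)) (D lam : ℝ), 0 < D ∧ 0 < lam ∧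
    (∀ t, 0 ≤ t → (P t).comp (P t) = P t) ∧
    (∀ t s, 0 ≤ s → s ≤ t → (P t).comp (T t s) = (T t s).comp (P s)) ∧
    (∀ t s, 0 ≤ s → s ≤ t →
      Set.BijOn (⇑(T t s)) (LinearMap.ker (P s : Ph d r →ₗ[ℝ] Ph d r) : Set (Ph d r))
        (LinearMap.ker (P t : Ph d r →ₗ[ℝ] Ph d r) : Set (Ph d r))) ∧
    (∀ t s, 0 ≤ s → s ≤ t → ‖(T t s).comp (P s)‖ ≤ D * Real.exp (-lam * (t - s))) ∧
    (∀ t s, 0 ≤ t → t ≤ s → ∀ φ ∈ LinearMap.ker (P t : Ph d r →ₗ[ℝ] Ph d r),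
      ‖φ‖ ≤ D * Real.exp (-lam * (s - t)) * ‖T s t φ‖)

lemma seg_continuous (d : ℕ) (r : ℝ) (x : ℝ → Rd d) (hx : Continuous x) :
    Continuous fun t => seg d r x hx t := by
  have hF : Continuous fun p : ℝ × (Set.Icc (-r) (0:ℝ)) => x (p.1 + p.2.1) :=
    hx.comp (continuous_fst.add (continuous_subtype_val.comp continuous_snd))
  have h : (fun t => seg d r x hx t) = ⇑(ContinuousMap.curry ⟨_, hF⟩) := by
    funext t; ext θ; rfl
  rw [h]; exact (ContinuousMap.curry _).continuous

/-- One-step Grönwall estimate with delay: if `x` is a true solution on `[a,∞)` with the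
same segment as the pseudosolution `y` at time `a`, then on `[a,b]` the segments stay
`δ/K*(exp(K(t-a))-1)`-close, provided `‖L‖ ≤ K` on `[a,b]`. -/
lemma gronwall_step (d : ℕ) (r : ℝ) (hr : 0 ≤ r) (L : ℝ → (Ph d r →L[ℝ] Rd d))
    (hL : ContinuousOn L (Set.Ici 0))
    (y yd x : ℝ → Rd d) (hy : Continuous y) (hx : Continuous x)
    (a b K δ : ℝ) (ha : 0 ≤ a) (hab : a ≤ b) (hK : 0 < K) (hδ : 0 < δ)
    (hLK : ∀ u ∈ Icc a b, ‖L u‖ ≤ K)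
    (hydc : ContinuousOn yd (Set.Ici 0))
    (hyd : ∀ t, 0 ≤ t → HasDerivWithinAt y (yd t) (Set.Ici 0) t)
    (hdef : ∀ t, 0 ≤ t → ‖yd t - L t (seg d r y hy t)‖ ≤ δ)
    (hxsol : IsSol d r L a x hx)
    (hinit : seg d r x hx a = seg d r y hy a) :
    ∀ t ∈ Icc a b, ‖seg d r y hy t - seg d r x hx t‖ ≤ δ / K * (Real.exp (K * (t - a)) - 1) := by
  set η : ℝ → Rd d := fun u => y u - x u with hηdef
  have hηc : Continuous η := hy.sub hx
  -- η vanishes on [a - r, a]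
  have hnull : ∀ u, a - r ≤ u → u ≤ a → η u = 0 := by
    intro u h1 h2
    have hθ : u - a ∈ Set.Icc (-r) (0:ℝ) := ⟨by linarith, by linarith⟩
    have := congrArg (fun f : Ph d r => f ⟨u - a, hθ⟩) hinit
    simp only [seg, ContinuousMap.coe_mk] at this
    have h3 : a + (u - a) = u := by ring
    rw [h3] at this
    simp [hηdef, this]
  have hψc : Continuous fun u => ‖seg d r y hy u - seg d r x hx u‖ :=
    ((seg_continuous d r y hy).sub (seg_continuous d r x hx)).norm
  set ψ : ℝ → ℝ := fun u => ‖seg d r y hy u - seg d r x hx u‖ with hψdef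
  have hψ0 : ∀ u, 0 ≤ ψ u := fun u => norm_nonneg _
  -- segment evaluation of the difference
  have hseg_apply : ∀ u (θ : Set.Icc (-r) (0:ℝ)),
      (seg d r y hy u - seg d r x hx u) θ = η (u + θ.1) := by
    intro u θ; simp [seg, hηdef]
  -- pointwise derivative bound
  set g : ℝ → Rd d := fun u => yd u - L u (seg d r x hx u) with hgdef
  have hηd : ∀ u ∈ Ico a b, HasDerivWithinAt η (g u) (Ici a) u := by
    intro u hu
    have h1 : HasDerivWithinAt y (yd u) (Ici a) u :=
      (hyd u (le_trans ha hu.1)).mono (fun v hv => le_trans ha hv)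
    have h2 : HasDerivWithinAt x (L u (seg d r x hx u)) (Ici a) u := hxsol u hu.1
    exact h1.sub h2
  have hgb : ∀ u ∈ Icc a b, ‖g u‖ ≤ K * ψ u + δ := by
    intro u hu
    have : g u = (yd u - L u (seg d r y hy u)) + L u (seg d r y hy u - seg d r x hx u) := by
      rw [map_sub]; show yd u - L u (seg d r x hx u) = _; abel
    rw [this]
    refine le_trans (norm_add_le _ _) ?_
    have h1 : ‖yd u - L u (seg d r y hy u)‖ ≤ δ := hdef u (le_trans ha hu.1)
    have h2 : ‖L u (seg d r y hy u - seg d r x hx u)‖ ≤ K * ψ u := by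
      refine le_trans ((L u).le_opNorm _) ?_
      exact mul_le_mul_of_nonneg_right (hLK u hu) (hψ0 u)
    linarith
  have hgc : ContinuousOn g (Icc a b) := by
    have hsub : Icc a b ⊆ Ici (0:ℝ) := fun v hv => le_trans ha hv.1
    exact (hydc.mono hsub).sub (((hL.mono hsub)).clm_apply
      ((seg_continuous d r x hx).continuousOn))
  -- the comparison function ζ
  set G : ℝ → ℝ := fun u => K * ψ u + δ with hGdef
  have hGc : Continuous G := (continuous_const.mul hψc).add continuous_const
  set ζ : ℝ → ℝ := fun v => ∫ u in a..v, G u with hζdef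
  have hζd : ∀ v, HasDerivAt ζ (G v) v := by
    intro v
    exact intervalIntegral.integral_hasDerivAt_right
      (hGc.intervalIntegrable _ _) (hGc.stronglyMeasurableAtFilter _ _) hGc.continuousAt
  have hζc : Continuous ζ := by
    have := fun v => (hζd v).continuousAt
    exact continuous_iff_continuousAt.2 this
  have hζmono : ∀ v w, a ≤ v → v ≤ w → ζ v ≤ ζ w := by
    intro v w _ hvw
    have h1 : ζ v + (∫ u in v..w, G u) = ζ w := by
      show (∫ u in a..v, G u) + (∫ u in v..w, G u) = (∫ u in a..w, G u)
      exact intervalIntegral.integral_add_adjacent_intervals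
        (hGc.intervalIntegrable _ _) (hGc.intervalIntegrable _ _)
    have h2 : 0 ≤ ∫ u in v..w, G u := by
      apply intervalIntegral.integral_nonneg hvw
      intro u _
      show 0 ≤ K * ψ u + δ
      have := hψ0 u
      nlinarith [hK.le]
    linarith
  have hζ0 : ∀ v, a ≤ v → 0 ≤ ζ v := by
    intro v hv
    have : ζ a = 0 := by simp [hζdef]
    have := hζmono a v le_rfl hv
    linarith [this]
  -- |η v| ≤ ζ v on [a,b]
  have hηζ : ∀ v ∈ Icc a b, ‖η v‖ ≤ ζ v := by
    intro v hv
    have hav : a ≤ v := hv.1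
    have hFTC : ∫ u in a..v, g u = η v - η a := by
      apply intervalIntegral.integral_eq_sub_of_hasDeriv_right_of_le hav
      · exact hηc.continuousOn
      · intro u hu
        refine (hηd u ⟨hu.1.le, lt_of_lt_of_le hu.2 hv.2⟩).mono ?_
        intro w hw
        exact le_trans hu.1.le (le_of_lt hw)
      · exact ((hgc.mono (Icc_subset_Icc le_rfl hv.2))).intervalIntegrable_of_Icc hav
    have hη0 : η a = 0 := hnull a (by linarith) le_rfl
    have heq : η v = ∫ u in a..v, g u := by rw [hFTC, hη0, sub_zero]
    rw [heq]
    have hb1 : ‖∫ u in a..v, g u‖ ≤ |∫ u in a..v, G u| := by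
      apply intervalIntegral.norm_integral_le_abs_of_norm_le
      · have hI : Set.uIoc a v = Ioc a v := uIoc_of_le hav
        rw [hI]
        refine (MeasureTheory.ae_restrict_mem measurableSet_Ioc).mono ?_
        intro u hu
        show ‖g u‖ ≤ K * ψ u + δ
        exact hgb u ⟨hu.1.le, hu.2.trans hv.2⟩
      · exact hGc.intervalIntegrable _ _
    have hb2 : |∫ u in a..v, G u| = ζ v := abs_of_nonneg (hζ0 v hav)
    rw [hb2] at hb1
    exact hb1
  -- segment norm bound : ψ ≤ ζ on [a,b]
  have hψζ : ∀ v ∈ Icc a b, ψ v ≤ ζ v := by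
    intro v hv
    have h0 : 0 ≤ ζ v := hζ0 v hv.1
    show ‖seg d r y hy v - seg d r x hx v‖ ≤ ζ v
    refine (ContinuousMap.norm_le _ h0).2 ?_
    intro θ
    rw [hseg_apply]
    by_cases hcase : v + θ.1 ≤ a
    · rw [hnull _ (by have h1 := θ.2.1; have h2 := hv.1; simp at h1 ⊢; linarith) hcase]
      simpa using h0
    · push_neg at hcase
      have hmem : v + θ.1 ∈ Icc a b := ⟨hcase.le, by have h1 := θ.2.2; have h2 := hv.2; linarith⟩
      exact le_trans (hηζ _ hmem) (hζmono _ _ hmem.1 (by have h1 := θ.2.2; linarith))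
  -- Grönwall for ζ
  intro t ht
  have hgron : ∀ v ∈ Icc a b, ‖ζ v‖ ≤ gronwallBound 0 K δ (v - a) := by
    apply norm_le_gronwallBound_of_norm_deriv_right_le (f' := G)
    · exact hζc.continuousOn
    · intro v _; exact (hζd v).hasDerivWithinAt
    · have : ζ a = 0 := by simp [hζdef]
      rw [this]; simp
    · intro v hv
      have h1 : ψ v ≤ ζ v := hψζ v ⟨hv.1, hv.2.le⟩
      have h0 : 0 ≤ ζ v := hζ0 v hv.1
      have hGv : ‖G v‖ = K * ψ v + δ := by
        show ‖K * ψ v + δ‖ = K * ψ v + δ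
        exact Real.norm_of_nonneg (by nlinarith [hψ0 v, hK.le])
      rw [hGv, Real.norm_of_nonneg h0]
      nlinarith
  have h2 := hgron t ht
  have h0 : 0 ≤ ζ t := hζ0 t ht.1
  have h3 : ψ t ≤ ζ t := hψζ t ht
  rw [Real.norm_of_nonneg h0] at h2
  have h4 : gronwallBound 0 K δ (t - a) = δ / K * (Real.exp (K * (t - a)) - 1) := by
    rw [gronwallBound_of_K_ne_0 hK.ne']; simp
  show ψ t ≤ _
  rw [← h4]
  linarith

set_option maxHeartbeats 3000000 in
/-- If Eq. x'(t) = L(t)x_t admits an exponential dichotomy, then it is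
Hyers--Ulam stable. -/
theorem stmt0 (d : ℕ) (r : ℝ) (hr : 0 ≤ r)
    (L : ℝ → (Ph d r →L[ℝ] Rd d)) (hL : ContinuousOn L (Set.Ici 0))
    (T : ℝ → ℝ → (Ph d r →L[ℝ] Ph d r))
    (hT : IsSolOp d r L T) (hcoc : Cocycle d r T)
    (hdich : ExpDich d r T) :
    HyersUlam d r L := by
  classical
  obtain ⟨P, D, lam, hD, hlam, hPP, hPT, hbij, hstab, hunst⟩ := hdich
  obtain ⟨hid, hcomp⟩ := hcoc
  have hlog2 : 0 < Real.log 2 := Real.log_pos (by norm_num)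
  refine ⟨1 + D * (2 + D) * Real.exp lam / (lam * Real.log 2), by positivity, ?_⟩
  intro δ hδ y yd hy hydc hyd hdef
  -- ### adaptive partition of [0, ∞)
  set M : ℝ → ℝ := fun s => sSup ((fun u => ‖L u‖) '' Icc s (s + 1)) with hMdef
  have hbddM : ∀ s : ℝ, 0 ≤ s → BddAbove ((fun u => ‖L u‖) '' Icc s (s + 1)) := by
    intro s hs
    have h1 : ContinuousOn L (Icc s (s + 1)) := by
      refine hL.mono ?_
      intro v hv
      exact le_trans hs hv.1
    obtain ⟨C, hC⟩ := @IsCompact.exists_bound_of_continuousOn ℝ (Ph d r →L[ℝ] Rd d) _ _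
      (Icc s (s + 1)) isCompact_Icc L h1
    exact ⟨C, by rintro v ⟨u, hu, rfl⟩; exact hC u hu⟩
  have hMb : ∀ s, 0 ≤ s → ∀ u ∈ Icc s (s + 1), ‖L u‖ ≤ M s := by
    intro s hs u hu
    exact le_csSup (hbddM s hs) ⟨u, hu, rfl⟩
  have hM0 : ∀ s, 0 ≤ s → 0 ≤ M s := fun s hs =>
    le_trans (norm_nonneg (L s)) (hMb s hs s ⟨le_rfl, by linarith⟩)
  set KK : ℝ → ℝ := fun s => 1 + M s with hKdef
  set hh : ℝ → ℝ := fun s => Real.log 2 / KK s with hhdef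
  have hK1 : ∀ s, 0 ≤ s → 1 ≤ KK s := by
    intro s hs; have := hM0 s hs; show 1 ≤ 1 + M s; linarith
  have hKpos : ∀ s, 0 ≤ s → 0 < KK s := fun s hs => lt_of_lt_of_le one_pos (hK1 s hs)
  have hhpos : ∀ s, 0 ≤ s → 0 < hh s := fun s hs => div_pos hlog2 (hKpos s hs)
  have hh1 : ∀ s, 0 ≤ s → hh s ≤ 1 := by
    intro s hs
    show Real.log 2 / KK s ≤ 1
    rw [div_le_one (hKpos s hs)]
    have := hK1 s hs
    linarith [Real.log_two_lt_d9]
  obtain ⟨tt, htt0, httsucc⟩ :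
      ∃ tt : ℕ → ℝ, tt 0 = 0 ∧ ∀ n, tt (n + 1) = tt n + hh (tt n) :=
    ⟨fun n => Nat.recAux (motive := fun _ => ℝ) 0 (fun _ s => s + hh s) n, rfl, fun n => rfl⟩
  have httnn : ∀ n, 0 ≤ tt n := by
    intro n; induction n with
    | zero => rw [htt0]
    | succ k ih => rw [httsucc]; have := hhpos _ ih; linarith
  have httlt : ∀ n, tt n < tt (n + 1) := fun n => by
    rw [httsucc]; have := hhpos _ (httnn n); linarith
  have httmono : Monotone tt := monotone_nat_of_le_succ (fun n => (httlt n).le)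
  have httstep1 : ∀ n, tt (n + 1) ≤ tt n + 1 := fun n => by
    rw [httsucc]; have := hh1 _ (httnn n); linarith
  have httKlog : ∀ n, KK (tt n) * (tt (n + 1) - tt n) = Real.log 2 := by
    intro n
    rw [httsucc]
    have h1 : KK (tt n) ≠ 0 := (hKpos _ (httnn n)).ne'
    show KK (tt n) * (tt n + Real.log 2 / KK (tt n) - tt n) = Real.log 2
    field_simp
    ring
  have httunb : ∀ B : ℝ, ∃ n, B < tt n := by
    intro B
    by_contra hcon
    push_neg at hcon
    have hB0 : 0 ≤ B := by have h1 := hcon 0; rw [htt0] at h1; exact h1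
    set C := sSup ((fun u => ‖L u‖) '' Icc 0 (B + 1)) with hCdef
    have hbdd : BddAbove ((fun u => ‖L u‖) '' Icc 0 (B + 1)) := by
      have h1 : ContinuousOn L (Icc 0 (B + 1)) := by
        refine hL.mono ?_
        intro v hv
        exact hv.1
      obtain ⟨C, hC⟩ := @IsCompact.exists_bound_of_continuousOn ℝ (Ph d r →L[ℝ] Rd d) _ _
        (Icc 0 (B + 1)) isCompact_Icc L h1
      exact ⟨C, by rintro v ⟨u, hu, rfl⟩; exact hC u hu⟩
    have hC0 : 0 ≤ C :=
      le_trans (norm_nonneg (L 0)) (le_csSup hbdd ⟨0, ⟨le_rfl, by linarith⟩, rfl⟩)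
    have hCb : ∀ n, M (tt n) ≤ C := by
      intro n
      apply csSup_le_csSup hbdd
      · exact ⟨‖L (tt n)‖, tt n, ⟨le_rfl, by linarith⟩, rfl⟩
      · apply Set.image_mono
        intro v hv
        exact ⟨le_trans (httnn n) hv.1, by have := hcon n; simp only [mem_Icc] at hv; linarith⟩
    set ε := Real.log 2 / (1 + C) with hεdef
    have hεpos : 0 < ε := div_pos hlog2 (by linarith)
    have hεh : ∀ n, ε ≤ hh (tt n) := by
      intro n
      show Real.log 2 / (1 + C) ≤ Real.log 2 / KK (tt n)
      have h2 : KK (tt n) ≤ 1 + C := by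
        show 1 + M (tt n) ≤ 1 + C
        linarith [hCb n]
      have h3 : (0:ℝ) < KK (tt n) := hKpos _ (httnn n)
      have h4 := hlog2.le
      gcongr
    have hlow : ∀ n : ℕ, (n : ℝ) * ε ≤ tt n := by
      intro n; induction n with
      | zero => simp [htt0]
      | succ k ih =>
        rw [httsucc]
        push_cast
        have := hεh k
        nlinarith
    obtain ⟨n, hn⟩ := exists_nat_gt (B / ε)
    rw [div_lt_iff₀ hεpos] at hn
    have h5 := hlow n
    have h6 := hcon n
    linarith
  -- ### solutions along the partition and one-step errors
  choose X hXc hXsol hXinit hXseg using fun n => hT (tt n) (httnn n) (seg d r y hy (tt n))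
  have hstep : ∀ n, ∀ t ∈ Icc (tt n) (tt (n + 1)),
      ‖seg d r y hy t - seg d r (X n) (hXc n) t‖ ≤ δ / KK (tt n) := by
    intro n t ht
    have hKn := hKpos _ (httnn n)
    have hLK : ∀ u ∈ Icc (tt n) (tt (n + 1)), ‖L u‖ ≤ KK (tt n) := by
      intro u hu
      have h1 := hMb (tt n) (httnn n) u ⟨hu.1, le_trans hu.2 (httstep1 n)⟩
      show ‖L u‖ ≤ 1 + M (tt n)
      linarith
    have h1 := gronwall_step d r hr L hL y yd (X n) hy (hXc n) (tt n) (tt (n + 1))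
      (KK (tt n)) δ (httnn n) (httlt n).le hKn hδ hLK hydc hyd hdef (hXsol n) (hXinit n) t ht
    have h2 : Real.exp (KK (tt n) * (t - tt n)) - 1 ≤ 1 := by
      have h3 : KK (tt n) * (t - tt n) ≤ Real.log 2 := by
        rw [← httKlog n]
        have := ht.1
        have := ht.2
        nlinarith
      have h4 : Real.exp (KK (tt n) * (t - tt n)) ≤ 2 := by
        calc Real.exp (KK (tt n) * (t - tt n)) ≤ Real.exp (Real.log 2) := Real.exp_le_exp.2 h3
        _ = 2 := Real.exp_log (by norm_num)
      linarith
    calc ‖seg d r y hy t - seg d r (X n) (hXc n) t‖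
        ≤ δ / KK (tt n) * (Real.exp (KK (tt n) * (t - tt n)) - 1) := h1
      _ ≤ δ / KK (tt n) * 1 := by
          apply mul_le_mul_of_nonneg_left h2 (by positivity)
      _ = δ / KK (tt n) := mul_one _
  set e : ℕ → Ph d r := fun k =>
    seg d r y hy (tt (k + 1)) - seg d r (X k) (hXc k) (tt (k + 1)) with hedef
  have hek : ∀ k, ‖e k‖ ≤ δ / KK (tt k) := fun k => hstep k _ ⟨(httlt k).le, le_rfl⟩
  have hekh : ∀ k, ‖e k‖ ≤ δ * (tt (k + 1) - tt k) / Real.log 2 := by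
    intro k
    have h1 := hek k
    have h2 : δ / KK (tt k) = δ * (tt (k + 1) - tt k) / Real.log 2 := by
      rw [← httKlog k]
      have h3 := hKpos _ (httnn k)
      have h4 : tt (k+1) - tt k ≠ 0 := (sub_pos.2 (httlt k)).ne'
      field_simp
    linarith
  set uu : ℕ → Ph d r := fun n => seg d r y hy (tt n) with huudef
  have huT : ∀ k, uu (k + 1) = T (tt (k + 1)) (tt k) (uu k) + e k := by
    intro k
    show seg d r y hy (tt (k+1)) = _
    rw [hedef]
    simp only []
    rw [← hXseg k (tt (k + 1)) (httlt k).le]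
    abel
  -- ### projections
  set Q : ℝ → (Ph d r →L[ℝ] Ph d r) :=
    fun s => ContinuousLinearMap.id ℝ (Ph d r) - P s with hQdef
  have hPapp : ∀ s, 0 ≤ s → ∀ φ, P s (P s φ) = P s φ := by
    intro s hs φ
    have h1 := congrArg (fun A : Ph d r →L[ℝ] Ph d r => A φ) (hPP s hs)
    simpa using h1
  have hPTp : ∀ t s, 0 ≤ s → s ≤ t → ∀ φ, P t (T t s φ) = T t s (P s φ) := by
    intro t s hs hst φ
    have h1 := congrArg (fun A : Ph d r →L[ℝ] Ph d r => A φ) (hPT t s hs hst)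
    simpa using h1
  have hPnorm : ∀ s, 0 ≤ s → ∀ φ, ‖P s φ‖ ≤ D * ‖φ‖ := by
    intro s hs φ
    have h1 := hstab s s hs le_rfl
    rw [hid s hs] at h1
    simp only [ContinuousLinearMap.id_comp, sub_self, mul_zero, neg_zero, Real.exp_zero,
      mul_one] at h1
    calc ‖P s φ‖ ≤ ‖P s‖ * ‖φ‖ := (P s).le_opNorm φ
    _ ≤ D * ‖φ‖ := mul_le_mul_of_nonneg_right h1 (norm_nonneg φ)
  have hQnorm : ∀ s, 0 ≤ s → ∀ φ, ‖Q s φ‖ ≤ (1 + D) * ‖φ‖ := by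
    intro s hs φ
    have h1 : Q s φ = φ - P s φ := rfl
    rw [h1]
    refine le_trans (norm_sub_le _ _) ?_
    have h2 := hPnorm s hs φ
    nlinarith [norm_nonneg φ]
  have hQker : ∀ s, 0 ≤ s → ∀ φ, P s (Q s φ) = 0 := by
    intro s hs φ
    show P s (φ - P s φ) = 0
    rw [map_sub, hPapp s hs φ, sub_self]
  -- ### choice of unstable preimages
  have hsur : ∀ a b : ℝ, ∀ ψ : Ph d r, ∃ φ : Ph d r,
      (0 ≤ a → a ≤ b → P b ψ = 0 → (P a φ = 0 ∧ T b a φ = ψ)) := by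
    intro a b ψ
    by_cases hc : 0 ≤ a ∧ a ≤ b ∧ P b ψ = 0
    · obtain ⟨h1, h2, h3⟩ := hc
      have hmem : ψ ∈ (LinearMap.ker (P b : Ph d r →ₗ[ℝ] Ph d r) : Set (Ph d r)) := by
        simp only [SetLike.mem_coe, LinearMap.mem_ker]
        exact h3
      obtain ⟨φ, hφ1, hφ2⟩ := (hbij b a h1 h2).surjOn hmem
      refine ⟨φ, fun _ _ _ => ⟨?_, hφ2⟩⟩
      simpa only [SetLike.mem_coe, LinearMap.mem_ker, ContinuousLinearMap.coe_coe] using hφ1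
    · exact ⟨0, fun h1 h2 h3 => absurd ⟨h1, h2, h3⟩ hc⟩
  choose wi hwi using hsur
  set W : ℕ → ℕ → Ph d r := fun n k => wi (tt n) (tt (k + 1)) (Q (tt (k + 1)) (e k)) with hWdef
  have hW : ∀ n k, n ≤ k + 1 →
      P (tt n) (W n k) = 0 ∧ T (tt (k + 1)) (tt n) (W n k) = Q (tt (k + 1)) (e k) :=
    fun n k hnk => hwi (tt n) (tt (k + 1)) (Q (tt (k + 1)) (e k)) (httnn n) (httmono hnk)
      (hQker _ (httnn (k + 1)) _)
  -- evolved unstable corrections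
  have hunst2 : ∀ (n k : ℕ) (c : ℝ), n ≤ k + 1 → tt n ≤ c → c ≤ tt (k + 1) →
      P c (T c (tt n) (W n k)) = 0 ∧
      T (tt (k + 1)) c (T c (tt n) (W n k)) = Q (tt (k + 1)) (e k) ∧
      ‖T c (tt n) (W n k)‖ ≤ D * Real.exp (-lam * (tt (k + 1) - c)) * ‖Q (tt (k + 1)) (e k)‖ := by
    intro n k c hnk h1 h2
    have h0n := httnn n
    have h0c : 0 ≤ c := le_trans h0n h1
    obtain ⟨hker, heq⟩ := hW n k hnk
    have hk1 : P c (T c (tt n) (W n k)) = 0 := by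
      rw [hPTp c (tt n) h0n h1, hker, map_zero]
    have hk2 : T (tt (k + 1)) c (T c (tt n) (W n k)) = Q (tt (k + 1)) (e k) := by
      have hc := hcomp (tt (k + 1)) c (tt n) h0n h1 h2
      have h3 := congrArg (fun A : Ph d r →L[ℝ] Ph d r => A (W n k)) hc
      simp only [ContinuousLinearMap.coe_comp', Function.comp_apply] at h3
      rw [← h3, heq]
    refine ⟨hk1, hk2, ?_⟩
    have h4 := hunst c (tt (k + 1)) h0c h2 (T c (tt n) (W n k))
      (by simp only [LinearMap.mem_ker]; exact hk1)
    rw [hk2] at h4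
    exact h4
  have hWshift : ∀ n k, n + 1 ≤ k + 1 →
      T (tt (n + 1)) (tt n) (W n k) = W (n + 1) k := by
    intro n k hnk
    obtain ⟨ha1, ha2, _⟩ := hunst2 n k (tt (n + 1)) (by omega) (httlt n).le (httmono hnk)
    obtain ⟨hb1, hb2⟩ := hW (n + 1) k hnk
    have hmema : T (tt (n + 1)) (tt n) (W n k) ∈ (LinearMap.ker (P (tt (n + 1)) : Ph d r →ₗ[ℝ] Ph d r) : Set (Ph d r)) := by
      simp only [SetLike.mem_coe, LinearMap.mem_ker]; exact ha1
    have hmemb : W (n + 1) k ∈ (LinearMap.ker (P (tt (n + 1)) : Ph d r →ₗ[ℝ] Ph d r) : Set (Ph d r)) := by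
      simp only [SetLike.mem_coe, LinearMap.mem_ker]; exact hb1
    refine (hbij (tt (k + 1)) (tt (n + 1)) (httnn _) (httmono hnk)).injOn hmema hmemb ?_
    show T (tt (k + 1)) (tt (n + 1)) (T (tt (n + 1)) (tt n) (W n k)) = T (tt (k + 1)) (tt (n + 1)) (W (n + 1) k)
    rw [ha2, hb2]
  -- ### telescoping exponential bounds
  have htel : ∀ (m : ℕ) (c : ℝ),
      (tt (m + 1) - tt m) * Real.exp (-lam * (tt (m + 1) - c)) ≤
      (Real.exp (-lam * (tt m - c)) - Real.exp (-lam * (tt (m + 1) - c))) / lam := by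
    intro m c
    have hstep := (httlt m).le
    have hE : Real.exp (-lam * (tt m - c)) =
        Real.exp (-lam * (tt (m + 1) - c)) * Real.exp (lam * (tt (m + 1) - tt m)) := by
      rw [← Real.exp_add]; congr 1; ring
    rw [hE, le_div_iff₀ hlam]
    have h1 := Real.add_one_le_exp (lam * (tt (m + 1) - tt m))
    have h2 := Real.exp_pos (-lam * (tt (m + 1) - c))
    linarith [mul_le_mul_of_nonneg_right h1 h2.le]
  set CB : ℝ := D * (1 + D) * δ / (Real.log 2 * lam) with hCBdef
  have h1D : (0:ℝ) < 1 + D := by linarith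
  have hCB : 0 < CB := div_pos (mul_pos (mul_pos hD h1D) hδ) (mul_pos hlog2 hlam)
  have hterm : ∀ (n : ℕ) (c : ℝ), tt n ≤ c → c ≤ tt (n + 1) → ∀ j : ℕ,
      ‖T c (tt n) (W n (n + j))‖ ≤
        CB * (Real.exp (-lam * (tt (n + j) - c)) - Real.exp (-lam * (tt (n + j + 1) - c))) := by
    intro n c h1 h2 j
    have hc2 : c ≤ tt (n + j + 1) := le_trans h2 (httmono (by omega))
    obtain ⟨_, _, h3⟩ := hunst2 n (n + j) c (by omega) h1 hc2
    have h4 := hQnorm (tt (n + j + 1)) (httnn _) (e (n + j))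
    have h5 := hekh (n + j)
    have hE1 : (0:ℝ) ≤ D * Real.exp (-lam * (tt (n + j + 1) - c)) :=
      mul_nonneg hD.le (Real.exp_pos _).le
    calc ‖T c (tt n) (W n (n + j))‖
        ≤ D * Real.exp (-lam * (tt (n + j + 1) - c)) * ‖Q (tt (n + j + 1)) (e (n + j))‖ := h3
      _ ≤ D * Real.exp (-lam * (tt (n + j + 1) - c)) *
          ((1 + D) * (δ * (tt (n + j + 1) - tt (n + j)) / Real.log 2)) := by
          apply mul_le_mul_of_nonneg_left _ hE1
          exact le_trans h4 (mul_le_mul_of_nonneg_left h5 h1D.le)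
      _ = (D * (1 + D) * δ / Real.log 2) *
          ((tt (n + j + 1) - tt (n + j)) * Real.exp (-lam * (tt (n + j + 1) - c))) := by ring
      _ ≤ (D * (1 + D) * δ / Real.log 2) *
          ((Real.exp (-lam * (tt (n + j) - c)) - Real.exp (-lam * (tt (n + j + 1) - c))) / lam) := by
          apply mul_le_mul_of_nonneg_left (htel (n + j) c)
          positivity
      _ = CB * (Real.exp (-lam * (tt (n + j) - c)) - Real.exp (-lam * (tt (n + j + 1) - c))) := by
          rw [hCBdef]; ring
  have hgAnti : ∀ (n : ℕ) (c : ℝ) (j : ℕ),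
      0 ≤ Real.exp (-lam * (tt (n + j) - c)) - Real.exp (-lam * (tt (n + j + 1) - c)) := by
    intro n c j
    have ha := (httlt (n + j)).le
    have hb : -lam * (tt (n + j + 1) - c) ≤ -lam * (tt (n + j) - c) := by nlinarith
    have hc := Real.exp_le_exp.2 hb
    linarith
  have htelsum : ∀ (n : ℕ) (c : ℝ) (m : ℕ),
      ∑ j ∈ Finset.range m,
        (Real.exp (-lam * (tt (n + j) - c)) - Real.exp (-lam * (tt (n + j + 1) - c)))
      = Real.exp (-lam * (tt (n + 0) - c)) - Real.exp (-lam * (tt (n + m) - c)) := by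
    intro n c m
    exact Finset.sum_range_sub' (fun j => Real.exp (-lam * (tt (n + j) - c))) m
  have hsumtel : ∀ (n : ℕ) (c : ℝ), Summable (fun j : ℕ =>
      Real.exp (-lam * (tt (n + j) - c)) - Real.exp (-lam * (tt (n + j + 1) - c))) := by
    intro n c
    apply summable_of_sum_range_le (c := Real.exp (-lam * (tt (n + 0) - c)))
    · exact fun j => hgAnti n c j
    · intro m
      rw [htelsum n c m]
      have := (Real.exp_pos (-lam * (tt (n + m) - c))).le
      linarith
  have hsumW : ∀ n : ℕ, Summable (fun j : ℕ => W n (n + j)) := by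
    intro n
    apply Summable.of_norm
    refine Summable.of_nonneg_of_le (fun j => norm_nonneg _) (fun j => ?_)
      ((hsumtel n (tt n)).mul_left CB)
    have hidw : T (tt n) (tt n) (W n (n + j)) = W n (n + j) := by
      rw [hid (tt n) (httnn n)]; rfl
    rw [← hidw]
    exact hterm n (tt n) le_rfl (httlt n).le j
  set bb : ℕ → Ph d r := fun n => ∑' j : ℕ, W n (n + j) with hbbdef
  have hbbT : ∀ (n : ℕ) (c : ℝ), tt n ≤ c → c ≤ tt (n + 1) →
      ‖T c (tt n) (bb n)‖ ≤ CB * Real.exp (lam * (c - tt n)) := by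
    intro n c h1 h2
    have hmap : T c (tt n) (bb n) = ∑' j : ℕ, T c (tt n) (W n (n + j)) := by
      rw [hbbdef]; exact ContinuousLinearMap.map_tsum _ (hsumW n)
    rw [hmap]
    refine le_trans (norm_tsum_le_tsum_norm ?_) ?_
    · exact Summable.of_nonneg_of_le (fun j => norm_nonneg _) (fun j => hterm n c h1 h2 j)
        ((hsumtel n c).mul_left CB)
    · apply Real.tsum_le_of_sum_range_le (fun j => norm_nonneg _)
      intro m
      calc ∑ j ∈ Finset.range m, ‖T c (tt n) (W n (n + j))‖
          ≤ ∑ j ∈ Finset.range m, CB *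
            (Real.exp (-lam * (tt (n + j) - c)) - Real.exp (-lam * (tt (n + j + 1) - c))) :=
            Finset.sum_le_sum (fun j _ => hterm n c h1 h2 j)
        _ = CB * ∑ j ∈ Finset.range m,
            (Real.exp (-lam * (tt (n + j) - c)) - Real.exp (-lam * (tt (n + j + 1) - c))) := by
            rw [Finset.mul_sum]
        _ = CB * (Real.exp (-lam * (tt (n + 0) - c)) - Real.exp (-lam * (tt (n + m) - c))) := by
            rw [htelsum n c m]
        _ ≤ CB * Real.exp (-lam * (tt (n + 0) - c)) := by
            have := (Real.exp_pos (-lam * (tt (n + m) - c))).le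
            nlinarith
        _ = CB * Real.exp (lam * (c - tt n)) := by
            have h9 : -lam * (tt (n + 0) - c) = lam * (c - tt n) := by
              have h10 : n + 0 = n := rfl
              rw [h10]; ring
            rw [h9]
  set ffs : ℕ → Ph d r := fun n =>
    ∑ k ∈ Finset.range n, T (tt n) (tt (k + 1)) (P (tt (k + 1)) (e k)) with hffdef
  set vv : ℕ → Ph d r := fun n => uu n + bb n - ffs n with hvvdef
  have hTTp : ∀ (τ t s : ℝ), 0 ≤ s → s ≤ t → t ≤ τ → ∀ φ,
      T τ t (T t s φ) = T τ s φ := by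
    intro τ t s h1 h2 h3 φ
    have h4 := congrArg (fun A : Ph d r →L[ℝ] Ph d r => A φ) (hcomp τ t s h1 h2 h3)
    simp only [ContinuousLinearMap.coe_comp', Function.comp_apply] at h4
    exact h4.symm
  have hAbb : ∀ n, T (tt (n + 1)) (tt n) (bb n) = Q (tt (n + 1)) (e n) + bb (n + 1) := by
    intro n
    have hmap : T (tt (n + 1)) (tt n) (bb n) = ∑' j : ℕ, T (tt (n + 1)) (tt n) (W n (n + j)) := by
      rw [hbbdef]; exact ContinuousLinearMap.map_tsum _ (hsumW n)
    have hfun : ∀ j : ℕ, T (tt (n + 1)) (tt n) (W n (n + j)) =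
        (fun j : ℕ => if j = 0 then Q (tt (n + 1)) (e n) else W (n + 1) (n + j)) j := by
      intro j
      cases j with
      | zero =>
        simp only [Nat.add_zero, if_pos rfl]
        exact (hW n n (by omega)).2
      | succ i =>
        simp only [if_neg (Nat.succ_ne_zero i)]
        exact hWshift n (n + (i + 1)) (by omega)
    have hsum2 : Summable (fun j : ℕ =>
        if j = 0 then Q (tt (n + 1)) (e n) else W (n + 1) (n + j)) := by
      refine Summable.congr ((hsumW n).map (T (tt (n + 1)) (tt n))
        (T (tt (n + 1)) (tt n)).continuous) ?_
      exact hfun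
    rw [hmap, tsum_congr hfun, Summable.tsum_eq_zero_add hsum2]
    simp only [if_pos rfl]
    congr 1
    rw [hbbdef]
    apply tsum_congr
    intro j
    rw [if_neg (Nat.succ_ne_zero j)]
    congr 1
    omega
  have hAff : ∀ n, T (tt (n + 1)) (tt n) (ffs n) = ffs (n + 1) - P (tt (n + 1)) (e n) := by
    intro n
    have h1 : T (tt (n + 1)) (tt n) (ffs n)
        = ∑ k ∈ Finset.range n, T (tt (n + 1)) (tt (k + 1)) (P (tt (k + 1)) (e k)) := by
      rw [hffdef]
      simp only []
      rw [map_sum]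
      apply Finset.sum_congr rfl
      intro k hk
      have hkn : k + 1 ≤ n := Finset.mem_range.1 hk
      exact hTTp (tt (n + 1)) (tt n) (tt (k + 1)) (httnn _) (httmono hkn) (httlt n).le _
    rw [h1]
    have h2 : ffs (n + 1) = (∑ k ∈ Finset.range n, T (tt (n + 1)) (tt (k + 1))
        (P (tt (k + 1)) (e k))) + T (tt (n + 1)) (tt (n + 1)) (P (tt (n + 1)) (e n)) :=
      Finset.sum_range_succ _ n
    rw [h2, hid (tt (n + 1)) (httnn _)]
    simp only [ContinuousLinearMap.id_apply]
    abel
  have horbit : ∀ n, T (tt (n + 1)) (tt n) (vv n) = vv (n + 1) := by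
    intro n
    show T (tt (n + 1)) (tt n) (uu n + bb n - ffs n) = uu (n + 1) + bb (n + 1) - ffs (n + 1)
    rw [map_sub, map_add, hAbb n, hAff n]
    have h3 : T (tt (n + 1)) (tt n) (uu n) = uu (n + 1) - e n := by rw [huT n]; abel
    rw [h3]
    have hQe : Q (tt (n + 1)) (e n) = e n - P (tt (n + 1)) (e n) := rfl
    rw [hQe]
    abel
  -- ### the shadowing solution
  obtain ⟨x, hx, hxsol, hxinit, hxseg⟩ := hT 0 le_rfl (vv 0)
  have hxv : ∀ n, T (tt n) 0 (vv 0) = vv n := by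
    intro n
    induction n with
    | zero =>
      rw [htt0, hid 0 le_rfl]; rfl
    | succ k ih =>
      have h1 := hTTp (tt (k + 1)) (tt k) 0 le_rfl (httnn k) (httlt k).le (vv 0)
      rw [← h1, ih, horbit k]
  refine ⟨x, hx, hxsol, ?_⟩
  intro t ht0
  have hexm : ∃ m : ℕ, t < tt m := httunb t
  set m0 := Nat.find hexm with hm0def
  have hm1 : t < tt m0 := Nat.find_spec hexm
  have hm0ne : m0 ≠ 0 := by
    intro hc
    rw [hc, htt0] at hm1
    linarith
  obtain ⟨n, hn⟩ : ∃ n, m0 = n + 1 := ⟨m0 - 1, by omega⟩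
  have hnlt : n < m0 := by omega
  have hn1 : tt n ≤ t := by
    by_contra hcon
    push_neg at hcon
    exact Nat.find_min hexm hnlt hcon
  have hn2 : t ≤ tt (n + 1) := by
    rw [hn] at hm1
    exact hm1.le
  have hsegx : seg d r x hx t = T t (tt n) (vv n) := by
    rw [hxseg t ht0, ← hxv n]
    exact (hTTp t (tt n) 0 le_rfl (httnn n) hn1 (vv 0)).symm
  -- part A : the local pseudo-orbit error
  have hA : ‖T t (tt n) (uu n) - seg d r y hy t‖ ≤ δ := by
    have h1 : T t (tt n) (uu n) = seg d r (X n) (hXc n) t := (hXseg n t hn1).symm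
    rw [h1, norm_sub_rev]
    refine le_trans (hstep n t ⟨hn1, hn2⟩) ?_
    exact div_le_self hδ.le (hK1 _ (httnn n))
  -- part B : the backward (unstable) series
  have hB : ‖T t (tt n) (bb n)‖ ≤ CB * Real.exp lam := by
    refine le_trans (hbbT n t hn1 hn2) ?_
    have h2 : t - tt n ≤ 1 := by
      have := httstep1 n; linarith
    have h1 : lam * (t - tt n) ≤ lam := by nlinarith
    have h3 := Real.exp_le_exp.2 h1
    have := hCB.le
    nlinarith
  -- part C : the forward (stable) sum
  have htel2 : ∀ k : ℕ, (tt (k + 1) - tt k) * Real.exp (-lam * (t - tt (k + 1)))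
      ≤ Real.exp lam / lam *
        (Real.exp (-lam * (t - tt (k + 1))) - Real.exp (-lam * (t - tt k))) := by
    intro k
    have hh01 : 0 ≤ tt (k + 1) - tt k := sub_nonneg.2 (httlt k).le
    have hh1k : tt (k + 1) - tt k ≤ 1 := by have := httstep1 k; linarith
    set z := lam * (tt (k + 1) - tt k) with hzdef
    have hz0 : 0 ≤ z := mul_nonneg hlam.le hh01
    have hzlam : z ≤ lam := by rw [hzdef]; nlinarith
    have hE : Real.exp (-lam * (t - tt k)) =
        Real.exp (-lam * (t - tt (k + 1))) * Real.exp (-z) := by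
      rw [← Real.exp_add]; congr 1; rw [hzdef]; ring
    have ha : 1 + z ≤ Real.exp z := by linarith [Real.add_one_le_exp z]
    have hb : Real.exp (-z) * (1 + z) ≤ 1 := by
      have hzp := Real.exp_pos (-z)
      calc Real.exp (-z) * (1 + z) ≤ Real.exp (-z) * Real.exp z :=
            mul_le_mul_of_nonneg_left ha hzp.le
        _ = 1 := by rw [← Real.exp_add]; simp
    have hc : Real.exp (-lam) ≤ Real.exp (-z) := Real.exp_le_exp.2 (by linarith)
    have hd : z * Real.exp (-lam) ≤ 1 - Real.exp (-z) := by
      nlinarith [mul_le_mul_of_nonneg_left hc hz0]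
    have he2 : Real.exp lam * Real.exp (-lam) = 1 := by rw [← Real.exp_add]; simp
    have hf : z ≤ Real.exp lam * (1 - Real.exp (-z)) := by
      nlinarith [mul_le_mul_of_nonneg_left hd (Real.exp_pos lam).le, Real.exp_pos lam,
        Real.exp_pos (-lam)]
    rw [hE]
    have hE1 := Real.exp_pos (-lam * (t - tt (k + 1)))
    rw [div_mul_eq_mul_div, le_div_iff₀ hlam]
    have hz2 : (tt (k + 1) - tt k) * lam = z := by rw [hzdef]; ring
    nlinarith [mul_le_mul_of_nonneg_left hf hE1.le]
  have hC : ‖T t (tt n) (ffs n)‖ ≤ D * δ * Real.exp lam / (Real.log 2 * lam) := by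
    have h1 : T t (tt n) (ffs n)
        = ∑ k ∈ Finset.range n, T t (tt (k + 1)) (P (tt (k + 1)) (e k)) := by
      show T t (tt n) (∑ k ∈ Finset.range n, T (tt n) (tt (k + 1)) (P (tt (k + 1)) (e k))) = _
      rw [map_sum]
      apply Finset.sum_congr rfl
      intro k hk
      have hkn : k + 1 ≤ n := Finset.mem_range.1 hk
      exact hTTp t (tt n) (tt (k + 1)) (httnn _) (httmono hkn) hn1 _
    rw [h1]
    refine le_trans (norm_sum_le _ _) ?_
    have hterm2 : ∀ k, k + 1 ≤ n → ‖T t (tt (k + 1)) (P (tt (k + 1)) (e k))‖ ≤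
        (D * δ / Real.log 2) * ((tt (k + 1) - tt k) * Real.exp (-lam * (t - tt (k + 1)))) := by
      intro k hkn
      have h0k : (0:ℝ) ≤ tt (k + 1) := httnn _
      have hkt : tt (k + 1) ≤ t := le_trans (httmono hkn) hn1
      have h2 : T t (tt (k + 1)) (P (tt (k + 1)) (e k))
          = ((T t (tt (k + 1))).comp (P (tt (k + 1)))) (e k) := rfl
      rw [h2]
      refine le_trans (ContinuousLinearMap.le_opNorm _ _) ?_
      have h3 := hstab t (tt (k + 1)) h0k hkt
      have h4 := hekh k
      calc ‖(T t (tt (k + 1))).comp (P (tt (k + 1)))‖ * ‖e k‖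
          ≤ (D * Real.exp (-lam * (t - tt (k + 1)))) * (δ * (tt (k + 1) - tt k) / Real.log 2) := by
            apply mul_le_mul h3 h4 (norm_nonneg _) (mul_nonneg hD.le (Real.exp_pos _).le)
        _ = (D * δ / Real.log 2) * ((tt (k + 1) - tt k) * Real.exp (-lam * (t - tt (k + 1)))) := by
            ring
    have hDd : (0:ℝ) ≤ D * δ / Real.log 2 := by positivity
    calc ∑ k ∈ Finset.range n, ‖T t (tt (k + 1)) (P (tt (k + 1)) (e k))‖
        ≤ ∑ k ∈ Finset.range n, (D * δ / Real.log 2) * (Real.exp lam / lam *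
            (Real.exp (-lam * (t - tt (k + 1))) - Real.exp (-lam * (t - tt k)))) := by
          apply Finset.sum_le_sum
          intro k hk
          refine le_trans (hterm2 k (Finset.mem_range.1 hk)) ?_
          exact mul_le_mul_of_nonneg_left (htel2 k) hDd
      _ = (D * δ / Real.log 2) * (Real.exp lam / lam) *
            ∑ k ∈ Finset.range n,
              (Real.exp (-lam * (t - tt (k + 1))) - Real.exp (-lam * (t - tt k))) := by
          rw [Finset.mul_sum]
          apply Finset.sum_congr rfl
          intro k _
          ring
      _ = (D * δ / Real.log 2) * (Real.exp lam / lam) *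
            (Real.exp (-lam * (t - tt n)) - Real.exp (-lam * (t - tt 0))) := by
          rw [Finset.sum_range_sub (fun k => Real.exp (-lam * (t - tt k)))]
      _ ≤ (D * δ / Real.log 2) * (Real.exp lam / lam) * 1 := by
          apply mul_le_mul_of_nonneg_left _ (by positivity)
          have h5 : Real.exp (-lam * (t - tt n)) ≤ 1 := by
            rw [show (1:ℝ) = Real.exp 0 from (Real.exp_zero).symm]
            apply Real.exp_le_exp.2
            nlinarith
          have h6 := (Real.exp_pos (-lam * (t - tt 0))).le
          linarith
      _ = D * δ * Real.exp lam / (Real.log 2 * lam) := by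
          field_simp
  -- ### assembling the estimate
  have hdecomp : seg d r x hx t - seg d r y hy t =
      (T t (tt n) (uu n) - seg d r y hy t) + T t (tt n) (bb n) - T t (tt n) (ffs n) := by
    rw [hsegx]
    show T t (tt n) (uu n + bb n - ffs n) - seg d r y hy t = _
    rw [map_sub, map_add]
    abel
  rw [hdecomp]
  have hfinal : δ + CB * Real.exp lam + D * δ * Real.exp lam / (Real.log 2 * lam)
      = (1 + D * (2 + D) * Real.exp lam / (lam * Real.log 2)) * δ := by
    rw [hCBdef]
    field_simp
    ring
  calc ‖(T t (tt n) (uu n) - seg d r y hy t) + T t (tt n) (bb n) - T t (tt n) (ffs n)‖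
      ≤ ‖(T t (tt n) (uu n) - seg d r y hy t) + T t (tt n) (bb n)‖ + ‖T t (tt n) (ffs n)‖ :=
        norm_sub_le _ _
    _ ≤ ‖T t (tt n) (uu n) - seg d r y hy t‖ + ‖T t (tt n) (bb n)‖ + ‖T t (tt n) (ffs n)‖ := by
        linarith [norm_add_le (T t (tt n) (uu n) - seg d r y hy t) (T t (tt n) (bb n))]
    _ ≤ δ + CB * Real.exp lam + D * δ * Real.exp lam / (Real.log 2 * lam) := by
        linarith
    _ = (1 + D * (2 + D) * Real.exp lam / (lam * Real.log 2)) * δ := hfinal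


end
end

section
/- If the equation x'(t) = L(t)x_t is shadowable, then it has the Perron property: for each bounded continuous function z : [0,∞) → ℝ^d there exists a bounded continuous function x : [-r,∞) → ℝ^d, differentiable on [0,∞), satisfying x'(t) = L(t)x_t + z(t) for all t ≥ 0. -/
open Set
set_option linter.unusedSectionVars false
set_option maxHeartbeats 1000000

noncomputable section

open MeasureTheory intervalIntegral Filter Topology

namespace StmtAux
variable {d : ℕ} {r : ℝ}

section picard
variable (Lt : ℝ → (Ph d r →L[ℝ] Rd d)) (hLt : Continuous Lt)

/-- weight exponent -/
def kf (t : ℝ) : ℝ := ∫ s in (0:ℝ)..t, (‖Lt s‖ + 1)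

include hLt

lemma kf_cont_integrand : Continuous (fun s => ‖Lt s‖ + 1) := by
  exact Continuous.add (Continuous.norm (E := Ph d r →L[ℝ] Rd d) hLt) continuous_const

lemma kf_mono : Monotone (kf Lt) := by
  intro a b hab
  have h1 : kf Lt a + ∫ s in a..b, (‖Lt s‖ + 1) = kf Lt b :=
    integral_add_adjacent_intervals ((kf_cont_integrand Lt hLt).intervalIntegrable _ _)
      ((kf_cont_integrand Lt hLt).intervalIntegrable _ _)
  have h2 : 0 ≤ ∫ s in a..b, (‖Lt s‖ + 1) :=
    intervalIntegral.integral_nonneg hab (fun s _ => by positivity)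
  linarith

omit hLt in
lemma kf_zero : kf Lt 0 = 0 := integral_same

lemma kf_ge (t : ℝ) (ht : 0 ≤ t) : t ≤ kf Lt t := by
  have h := intervalIntegral.integral_mono_on (f := fun _ => (1:ℝ))
    (g := fun s => ‖Lt s‖ + 1) (μ := volume) ht
    (_root_.intervalIntegrable_const)
    ((kf_cont_integrand Lt hLt).intervalIntegrable _ _)
    (fun s _ => by have := norm_nonneg (Lt s); beta_reduce; linarith)
  simpa [kf] using h

/-- weight -/
def Ef (t : ℝ) : ℝ := Real.exp (2 * kf Lt t)

omit hLt in
lemma Ef_pos (t : ℝ) : 0 < Ef Lt t := Real.exp_pos _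

lemma Ef_mono : Monotone (Ef Lt) := fun a b hab =>
  Real.exp_le_exp.2 (by linarith [kf_mono Lt hLt hab])

lemma one_le_Ef (t : ℝ) (ht : 0 ≤ t) : 1 ≤ Ef Lt t := by
  have h := kf_mono Lt hLt ht
  rw [kf_zero Lt] at h
  exact Real.one_le_exp (by linarith)

lemma le_Ef (t : ℝ) (ht : 0 ≤ t) : t ≤ Ef Lt t := by
  have h1 := kf_ge Lt hLt t ht
  have h2 : 2 * kf Lt t + 1 ≤ Real.exp (2 * kf Lt t) := Real.add_one_le_exp _
  have h3 : (0:ℝ) ≤ kf Lt t := le_trans ht h1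
  simp only [Ef]; linarith

lemma hasDeriv_kf (t : ℝ) : HasDerivAt (kf Lt) (‖Lt t‖ + 1) t :=
  integral_hasDerivAt_right ((kf_cont_integrand Lt hLt).intervalIntegrable _ _)
    ((kf_cont_integrand Lt hLt).stronglyMeasurableAtFilter _ _)
    (kf_cont_integrand Lt hLt).continuousAt

lemma Ef_cont : Continuous (Ef Lt) :=
  Real.continuous_exp.comp (continuous_const.mul
    (intervalIntegral.continuous_primitive
      (fun a b => (kf_cont_integrand Lt hLt).intervalIntegrable a b) 0))

lemma integral_weight (x : ℝ) :
    ∫ s in (0:ℝ)..x, (‖Lt s‖ + 1) * Ef Lt s = (Ef Lt x - 1) / 2 := by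
  have hd : ∀ s ∈ uIcc (0:ℝ) x, HasDerivAt (fun u => Ef Lt u / 2) ((‖Lt s‖ + 1) * Ef Lt s) s := by
    intro s _
    have h1 : HasDerivAt (fun u => 2 * kf Lt u) (2 * (‖Lt s‖ + 1)) s :=
      (hasDeriv_kf Lt hLt s).const_mul 2
    have h2 : HasDerivAt (fun u => Real.exp (2 * kf Lt u))
        (Real.exp (2 * kf Lt s) * (2 * (‖Lt s‖ + 1))) s := h1.exp
    have h3 : HasDerivAt (fun u => Real.exp (2 * kf Lt u) / 2)
        (Real.exp (2 * kf Lt s) * (2 * (‖Lt s‖ + 1)) / 2) s := h2.div_const 2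
    convert h3 using 1
    · rfl
    simp only [Ef]; ring
  have hint : IntervalIntegrable (fun s => (‖Lt s‖ + 1) * Ef Lt s) volume 0 x :=
    ((kf_cont_integrand Lt hLt).mul (Ef_cont Lt hLt)).intervalIntegrable _ _
  rw [intervalIntegral.integral_eq_sub_of_hasDerivAt hd hint]
  simp [Ef, kf_zero Lt]
  ring


-- segment lemmas
end picard

lemma seg_apply (x : ℝ → Rd d) (hx : Continuous x) (t : ℝ) (θ : Set.Icc (-r) (0:ℝ)) :
    seg d r x hx t θ = x (t + θ.1) := rfl

lemma seg_sub (x y : ℝ → Rd d) (hx : Continuous x) (hy : Continuous y)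
    (h : Continuous (fun s => x s - y s)) (t : ℝ) :
    seg d r (fun s => x s - y s) h t = seg d r x hx t - seg d r y hy t := by
  ext θ; simp [seg]

lemma seg_smul (c : ℝ) (x : ℝ → Rd d) (hx : Continuous x)
    (h : Continuous fun s => c • x s) (t : ℝ) :
    seg d r (fun s => c • x s) h t = c • seg d r x hx t := by ext θ; simp [seg]

lemma norm_seg_le (x : ℝ → Rd d) (hx : Continuous x) (t M : ℝ) (hM : 0 ≤ M)
    (h : ∀ s, t - r ≤ s → s ≤ t → ‖x s‖ ≤ M) : ‖seg d r x hx t‖ ≤ M := by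
  rw [ContinuousMap.norm_le _ hM]
  intro θ
  exact h (t + θ.1) (by linarith [θ.2.1]) (by linarith [θ.2.2])

lemma seg_continuous (x : ℝ → Rd d) (hx : Continuous x) :
    Continuous (fun t => seg d r x hx t) := by
  have h : (fun t => seg d r x hx t) =
      ⇑(ContinuousMap.curry ⟨fun p : ℝ × Set.Icc (-r) (0:ℝ) => x (p.1 + p.2.1),
        hx.comp (continuous_fst.add (continuous_subtype_val.comp continuous_snd))⟩) := by
    funext t; ext θ; rfl
  rw [h]; exact ContinuousMap.continuous _

lemma contL_eval (Lt : ℝ → (Ph d r →L[ℝ] Rd d)) (hLt : Continuous Lt)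
    (x : ℝ → Rd d) (hx : Continuous x) :
    Continuous (fun t => Lt t (seg d r x hx t)) :=
  isBoundedBilinearMap_apply.continuous.comp (hLt.prodMk (seg_continuous x hx))

section picard2
variable (Lt : ℝ → (Ph d r →L[ℝ] Rd d)) (hLt : Continuous Lt)
  (zt : ℝ → Rd d) (hzt : Continuous zt)

def gfun (x : ℝ → Rd d) (hx : Continuous x) : ℝ → Rd d :=
  fun s => Lt s (seg d r x hx s) + zt s

lemma gfun_cont (hLt : Continuous Lt) (hzt : Continuous zt) (x : ℝ → Rd d) (hx : Continuous x) :
    Continuous (gfun Lt zt x hx) := (contL_eval Lt hLt x hx).add hzt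

def Pmap (x : ℝ → Rd d) (hx : Continuous x) (t : ℝ) : Rd d :=
  ∫ s in (0:ℝ)..(max t 0), gfun Lt zt x hx s

lemma Pmap_cont (hLt : Continuous Lt) (hzt : Continuous zt) (x : ℝ → Rd d) (hx : Continuous x) :
    Continuous (Pmap Lt zt x hx) :=
  (intervalIntegral.continuous_primitive
    (fun a b => (gfun_cont Lt zt hLt hzt x hx).intervalIntegrable a b) 0).comp
    (continuous_id.max continuous_const)

def stepFun (hLt : Continuous Lt) (hzt : Continuous zt) (u : C(ℝ, Rd d)) : C(ℝ, Rd d) :=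
  ⟨Pmap Lt zt u u.continuous, Pmap_cont Lt zt hLt hzt u u.continuous⟩

def picard (hLt : Continuous Lt) (hzt : Continuous zt) (n : ℕ) : C(ℝ, Rd d) :=
  (stepFun Lt zt hLt hzt)^[n] 0

lemma picard_succ (hLt : Continuous Lt) (hzt : Continuous zt) (n : ℕ) (t : ℝ) :
    picard Lt zt hLt hzt (n+1) t
      = Pmap Lt zt (picard Lt zt hLt hzt n) (picard Lt zt hLt hzt n).continuous t := by
  have h : picard Lt zt hLt hzt (n+1) = stepFun Lt zt hLt hzt (picard Lt zt hLt hzt n) :=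
    Function.iterate_succ_apply' _ _ _
  rw [h]; rfl

lemma Pmap_diff (hLt : Continuous Lt) (hzt : Continuous zt)
    (u v : ℝ → Rd d) (hu : Continuous u) (hv : Continuous v) (C : ℝ) (hC : 0 ≤ C)
    (h : ∀ s, ‖u s - v s‖ ≤ C * Ef Lt (max s 0)) (t : ℝ) :
    ‖Pmap Lt zt u hu t - Pmap Lt zt v hv t‖ ≤ C / 2 * Ef Lt (max t 0) := by
  set p := max t 0 with hp
  have hp0 : 0 ≤ p := le_max_right _ _
  have hLu : Continuous fun s => Lt s (seg d r u hu s) := contL_eval Lt hLt u hu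
  have hLv : Continuous fun s => Lt s (seg d r v hv s) := contL_eval Lt hLt v hv
  have e1 : Pmap Lt zt u hu t - Pmap Lt zt v hv t
      = ∫ s in (0:ℝ)..p, (Lt s (seg d r u hu s) - Lt s (seg d r v hv s)) := by
    rw [Pmap, Pmap, ← intervalIntegral.integral_sub
      ((gfun_cont Lt zt hLt hzt u hu).intervalIntegrable _ _)
      ((gfun_cont Lt zt hLt hzt v hv).intervalIntegrable _ _)]
    congr 1; funext s; simp only [gfun]; abel
  rw [e1]
  have key : ∀ s ∈ Icc (0:ℝ) p,
      ‖Lt s (seg d r u hu s) - Lt s (seg d r v hv s)‖ ≤ (‖Lt s‖ + 1) * (C * Ef Lt s) := by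
    intro s hs
    have hseg : ‖seg d r u hu s - seg d r v hv s‖ ≤ C * Ef Lt s := by
      rw [← seg_sub u v hu hv (hu.sub hv)]
      apply norm_seg_le _ _ _ _ (mul_nonneg hC (Ef_pos Lt s).le)
      intro σ _ hσ2
      calc ‖u σ - v σ‖ ≤ C * Ef Lt (max σ 0) := h σ
        _ ≤ C * Ef Lt s := by
            apply mul_le_mul_of_nonneg_left _ hC
            exact Ef_mono Lt hLt (max_le hσ2 hs.1)
    calc ‖Lt s (seg d r u hu s) - Lt s (seg d r v hv s)‖
        = ‖Lt s (seg d r u hu s - seg d r v hv s)‖ := by rw [map_sub]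
      _ ≤ ‖Lt s‖ * ‖seg d r u hu s - seg d r v hv s‖ := ContinuousLinearMap.le_opNorm _ _
      _ ≤ ‖Lt s‖ * (C * Ef Lt s) := mul_le_mul_of_nonneg_left hseg (norm_nonneg (Lt s))
      _ ≤ (‖Lt s‖ + 1) * (C * Ef Lt s) := by
          have h1 : 0 ≤ C * Ef Lt s := mul_nonneg hC (Ef_pos Lt s).le
          nlinarith
  have hcont1 : Continuous fun s => Lt s (seg d r u hu s) - Lt s (seg d r v hv s) :=
    hLu.sub hLv
  calc ‖∫ s in (0:ℝ)..p, (Lt s (seg d r u hu s) - Lt s (seg d r v hv s))‖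
      ≤ ∫ s in (0:ℝ)..p, ‖Lt s (seg d r u hu s) - Lt s (seg d r v hv s)‖ :=
        intervalIntegral.norm_integral_le_integral_norm hp0
    _ ≤ ∫ s in (0:ℝ)..p, (‖Lt s‖ + 1) * (C * Ef Lt s) := by
        apply intervalIntegral.integral_mono_on hp0
          (hcont1.norm.intervalIntegrable _ _)
          (((kf_cont_integrand Lt hLt).mul ((continuous_const.mul (Ef_cont Lt hLt)))).intervalIntegrable _ _)
          key
    _ = C * ∫ s in (0:ℝ)..p, (‖Lt s‖ + 1) * Ef Lt s := by
        rw [← intervalIntegral.integral_const_mul]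
        congr 1; funext s; ring
    _ = C * ((Ef Lt p - 1) / 2) := by rw [integral_weight Lt hLt]
    _ ≤ C / 2 * Ef Lt p := by nlinarith [one_le_Ef Lt hLt p hp0]


lemma seg_zero' (hx : Continuous (⇑(0 : C(ℝ, Rd d)))) (t : ℝ) :
    seg d r (⇑(0 : C(ℝ, Rd d))) hx t = 0 := by ext θ; simp [seg]

lemma picard_base (hLt : Continuous Lt) (hzt : Continuous zt)
    (B : ℝ) (hB0 : 0 ≤ B) (hzB : ∀ s, ‖zt s‖ ≤ B) (t : ℝ) :
    ‖picard Lt zt hLt hzt 1 t - picard Lt zt hLt hzt 0 t‖ ≤ B * Ef Lt (max t 0) := by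
  set p := max t 0 with hp
  have hp0 : 0 ≤ p := le_max_right _ _
  have h0 : picard Lt zt hLt hzt 0 t = 0 := rfl
  have h1 : picard Lt zt hLt hzt 1 t = ∫ s in (0:ℝ)..p, zt s := by
    rw [picard_succ]
    show Pmap Lt zt _ _ t = _
    rw [Pmap]
    congr 1; funext s
    show Lt s (seg d r (⇑(picard Lt zt hLt hzt 0)) (picard Lt zt hLt hzt 0).continuous s) + zt s = zt s
    have hseg0 : seg d r (⇑(picard Lt zt hLt hzt 0)) (picard Lt zt hLt hzt 0).continuous s = 0 := by
      ext θ; simp [seg, picard]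
    rw [hseg0, map_zero, zero_add]
  rw [h0, h1, sub_zero]
  calc ‖∫ s in (0:ℝ)..p, zt s‖ ≤ ∫ s in (0:ℝ)..p, ‖zt s‖ :=
      intervalIntegral.norm_integral_le_integral_norm hp0
    _ ≤ ∫ _ in (0:ℝ)..p, B := by
        apply intervalIntegral.integral_mono_on hp0
          (hzt.norm.intervalIntegrable _ _) (_root_.intervalIntegrable_const)
          (fun s _ => hzB s)
    _ = p * B := by simp
    _ ≤ Ef Lt p * B := mul_le_mul_of_nonneg_right (le_Ef Lt hLt p hp0) hB0
    _ = B * Ef Lt p := mul_comm _ _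

lemma picard_bound (hLt : Continuous Lt) (hzt : Continuous zt)
    (B : ℝ) (hB0 : 0 ≤ B) (hzB : ∀ s, ‖zt s‖ ≤ B) :
    ∀ (n : ℕ) (t : ℝ), ‖picard Lt zt hLt hzt (n+1) t - picard Lt zt hLt hzt n t‖
      ≤ B * (1/2)^n * Ef Lt (max t 0) := by
  intro n
  induction n with
  | zero => simpa using picard_base Lt zt hLt hzt B hB0 hzB
  | succ n ih =>
    intro t
    have h := Pmap_diff Lt zt hLt hzt (⇑(picard Lt zt hLt hzt (n+1))) (⇑(picard Lt zt hLt hzt n))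
      (picard Lt zt hLt hzt (n+1)).continuous (picard Lt zt hLt hzt n).continuous
      (B * (1/2)^n) (by positivity) ih t
    rw [picard_succ, picard_succ]
    calc ‖Pmap Lt zt _ _ t - Pmap Lt zt _ _ t‖ ≤ B * (1/2)^n / 2 * Ef Lt (max t 0) := h
      _ = B * (1/2)^(n+1) * Ef Lt (max t 0) := by ring

theorem exists_nonhom (hLt : Continuous Lt) (hzt : Continuous zt)
    (B : ℝ) (hB0 : 0 ≤ B) (hzB : ∀ s, ‖zt s‖ ≤ B) :
    ∃ (x : ℝ → Rd d) (hx : Continuous x), (∀ t, t ≤ 0 → x t = 0) ∧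
      ∀ t, 0 ≤ t → HasDerivWithinAt x (Lt t (seg d r x hx t) + zt t) (Set.Ici 0) t := by
  have hgeo : ∀ t n, dist (picard Lt zt hLt hzt n t) (picard Lt zt hLt hzt (n+1) t)
      ≤ (B * Ef Lt (max t 0)) * (1/2)^n := by
    intro t n
    rw [dist_eq_norm, norm_sub_rev]
    calc ‖picard Lt zt hLt hzt (n+1) t - picard Lt zt hLt hzt n t‖
        ≤ B * (1/2)^n * Ef Lt (max t 0) := picard_bound Lt zt hLt hzt B hB0 hzB n t
      _ = (B * Ef Lt (max t 0)) * (1/2)^n := by ring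
  have hcauchy : ∀ t, ∃ a, Tendsto (fun n => picard Lt zt hLt hzt n t) atTop (𝓝 a) :=
    fun t => cauchySeq_tendsto_of_complete
      (cauchySeq_of_le_geometric (1/2) (B * Ef Lt (max t 0)) (by norm_num) (hgeo t))
  choose x hx using hcauchy
  have hdist : ∀ (n : ℕ) t, ‖picard Lt zt hLt hzt n t - x t‖
      ≤ (2*B*(1/2)^n) * Ef Lt (max t 0) := by
    intro n t
    have h := dist_le_of_le_geometric_of_tendsto (1/2) (B * Ef Lt (max t 0))
      (by norm_num) (hgeo t) (hx t) n
    rw [dist_eq_norm] at h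
    calc ‖picard Lt zt hLt hzt n t - x t‖ ≤ (B * Ef Lt (max t 0)) * (1/2)^n / (1 - 1/2) := h
      _ = (2*B*(1/2)^n) * Ef Lt (max t 0) := by ring
  have hxc : Continuous x := by
    have hlu : TendstoLocallyUniformly (fun n t => picard Lt zt hLt hzt n t) x atTop := by
      rw [tendstoLocallyUniformly_iff_forall_isCompact]
      intro K hK
      rw [Metric.tendstoUniformlyOn_iff]
      intro ε hε
      obtain ⟨R, hR⟩ := hK.isBounded.subset_closedBall 0
      set a := max R 0 with ha
      have hEbd : ∀ t ∈ K, Ef Lt (max t 0) ≤ Ef Lt a := by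
        intro t ht
        apply Ef_mono Lt hLt
        apply max_le_max _ le_rfl
        have := hR ht
        rw [Metric.mem_closedBall, Real.dist_eq, sub_zero] at this
        exact le_trans (le_abs_self t) this
      have htend : Tendsto (fun n : ℕ => (2*B*(1/2)^n) * Ef Lt a) atTop (𝓝 0) := by
        have h1 : Tendsto (fun n : ℕ => ((1:ℝ)/2)^n) atTop (𝓝 0) :=
          tendsto_pow_atTop_nhds_zero_of_lt_one (by norm_num) (by norm_num)
        have h2 := (h1.const_mul (2*B)).mul_const (Ef Lt a)
        simpa using h2
      filter_upwards [htend.eventually (gt_mem_nhds hε)] with n hn t ht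
      rw [dist_comm, dist_eq_norm]
      calc ‖picard Lt zt hLt hzt n t - x t‖ ≤ (2*B*(1/2)^n) * Ef Lt (max t 0) := hdist n t
        _ ≤ (2*B*(1/2)^n) * Ef Lt a := by
            apply mul_le_mul_of_nonneg_left (hEbd t ht) (by positivity)
        _ < ε := hn
    exact hlu.continuous (Frequently.of_forall fun n => (picard Lt zt hLt hzt n).continuous)
  have hfix : ∀ t, x t = Pmap Lt zt x hxc t := by
    intro t
    have h1 : Tendsto (fun n => picard Lt zt hLt hzt (n+1) t) atTop (𝓝 (x t)) :=
      (hx t).comp (tendsto_add_atTop_nat 1)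
    have h2 : Tendsto (fun n => picard Lt zt hLt hzt (n+1) t) atTop (𝓝 (Pmap Lt zt x hxc t)) := by
      rw [tendsto_iff_dist_tendsto_zero]
      apply squeeze_zero (fun n => dist_nonneg)
        (g := fun n : ℕ => (2*B*(1/2)^n) / 2 * Ef Lt (max t 0))
      · intro n
        rw [picard_succ, dist_eq_norm]
        exact Pmap_diff Lt zt hLt hzt _ _ (picard Lt zt hLt hzt n).continuous hxc
          (2*B*(1/2)^n) (by positivity) (fun s => hdist n s) t
      · have h1 : Tendsto (fun n : ℕ => ((1:ℝ)/2)^n) atTop (𝓝 0) :=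
          tendsto_pow_atTop_nhds_zero_of_lt_one (by norm_num) (by norm_num)
        have h2 := ((h1.const_mul (2*B)).div_const 2).mul_const (Ef Lt (max t 0))
        simpa using h2
    exact tendsto_nhds_unique h1 h2
  refine ⟨x, hxc, ?_, ?_⟩
  · intro t ht
    rw [hfix t]
    rw [Pmap, max_eq_right ht, intervalIntegral.integral_same]
  · intro t ht
    have hgc : Continuous (gfun Lt zt x hxc) := gfun_cont Lt zt hLt hzt x hxc
    have hG : HasDerivAt (fun u => ∫ s in (0:ℝ)..u, gfun Lt zt x hxc s)
        (gfun Lt zt x hxc t) t :=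
      intervalIntegral.integral_hasDerivAt_right (hgc.intervalIntegrable _ _)
        (hgc.stronglyMeasurableAtFilter _ _) hgc.continuousAt
    have hGW := hG.hasDerivWithinAt (s := Set.Ici 0)
    have hres : HasDerivWithinAt x (gfun Lt zt x hxc t) (Set.Ici 0) t := by
      apply hGW.congr
      · intro s hs
        rw [hfix s, Pmap, max_eq_left (mem_Ici.mp hs)]
      · rw [hfix t, Pmap, max_eq_left ht]
    exact hres

end picard2
end StmtAux

/-- If Eq. x'(t) = L(t)x_t is shadowable, then it has the Perron property:
for every bounded continuous z on [0,∞) the nonhomogeneous equation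
x'(t) = L(t)x_t + z(t) has a bounded continuous solution on [-r,∞). -/
theorem stmt2 (d : ℕ) (r : ℝ) (hr : 0 ≤ r)
    (L : ℝ → (Ph d r →L[ℝ] Rd d)) (hL : ContinuousOn L (Set.Ici 0))
    (hsh : Shadowable d r L) :
    ∀ z : ℝ → Rd d, ContinuousOn z (Set.Ici 0) → (∃ B, ∀ t, 0 ≤ t → ‖z t‖ ≤ B) →
      ∃ (x : ℝ → Rd d) (hx : Continuous x),
        (∃ B, ∀ t, -r ≤ t → ‖x t‖ ≤ B) ∧
        ∀ t, 0 ≤ t → HasDerivWithinAt x (L t (seg d r x hx t) + z t) (Set.Ici 0) t := by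
  intro z hz hBex
  obtain ⟨B0, hB0⟩ := hBex
  have hBpos : (0:ℝ) < max B0 0 + 1 := by positivity
  set B : ℝ := max B0 0 + 1 with hBdef
  obtain ⟨δ, hδ, hshad⟩ := hsh 1 one_pos
  set c : ℝ := δ / B with hcdef
  have hc : 0 < c := div_pos hδ hBpos
  have hcB : c * B = δ := div_mul_cancel₀ δ (ne_of_gt hBpos)
  have hmx : Continuous (fun t : ℝ => max t 0) := continuous_id.max continuous_const
  set Lt : ℝ → (Ph d r →L[ℝ] Rd d) := fun t => L (max t 0) with hLtdef
  have hLt : Continuous Lt :=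
    hL.comp_continuous hmx (fun t => mem_Ici.mpr (le_max_right _ _))
  set zt : ℝ → Rd d := fun t => z (max t 0) with hztdef
  have hzt : Continuous zt :=
    hz.comp_continuous hmx (fun t => mem_Ici.mpr (le_max_right _ _))
  have hztB : ∀ s, ‖zt s‖ ≤ B := by
    intro s
    calc ‖z (max s 0)‖ ≤ B0 := hB0 _ (le_max_right _ _)
      _ ≤ B := by rw [hBdef]; have := le_max_left B0 (0:ℝ); linarith
  obtain ⟨u, hu, hu0, hud⟩ := StmtAux.exists_nonhom Lt zt hLt hzt B hBpos.le hztB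
  set y : ℝ → Rd d := fun t => c • u t with hydef
  have hy : Continuous y := hu.const_smul c
  set yd : ℝ → Rd d := fun t => c • (Lt t (seg d r u hu t) + zt t) with hyddef
  have hydc : ContinuousOn yd (Set.Ici 0) :=
    (((StmtAux.contL_eval Lt hLt u hu).add hzt).const_smul c).continuousOn
  have hyder : ∀ t, 0 ≤ t → HasDerivWithinAt y (yd t) (Set.Ici 0) t :=
    fun t ht => (hud t ht).const_smul c
  have hsegy : ∀ t, seg d r y hy t = c • seg d r u hu t :=
    fun t => StmtAux.seg_smul c u hu hy t
  have hdefect : ∀ t, 0 ≤ t → ‖yd t - L t (seg d r y hy t)‖ ≤ δ := by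
    intro t ht
    have hLeq : Lt t = L t := by rw [hLtdef]; simp [max_eq_left ht]
    have hzeq : zt t = z t := by rw [hztdef]; simp [max_eq_left ht]
    have h1 : yd t - L t (seg d r y hy t) = c • z t := by
      rw [hsegy t, _root_.map_smul, hyddef]
      simp only [hLeq, hzeq, smul_add]
      abel
    rw [h1, norm_smul, Real.norm_eq_abs, abs_of_pos hc]
    calc c * ‖z t‖ ≤ c * B := by
          have := hztB t
          rw [hztdef] at this
          simp only [max_eq_left ht] at this
          exact mul_le_mul_of_nonneg_left this hc.le
      _ = δ := hcB
  obtain ⟨xh, hxh, hsol, hclose⟩ := hshad y yd hy hydc hyder hdefect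
  set w : ℝ → Rd d := fun t => c⁻¹ • (y t - xh t) with hwdef
  have hw : Continuous w := (hy.sub hxh).const_smul (c⁻¹)
  have hwb : ∀ t, -r ≤ t → ‖w t‖ ≤ c⁻¹ := by
    intro t htr
    have ht'0 : (0:ℝ) ≤ max t 0 := le_max_right _ _
    have hcl := hclose (max t 0) ht'0
    have hθ : t - max t 0 ∈ Set.Icc (-r) (0:ℝ) := by
      constructor
      · rcases le_total t 0 with h | h
        · rw [max_eq_right h]; simp only [sub_zero]; exact htr
        · rw [max_eq_left h]; simp; linarith
      · exact sub_nonpos.mpr (le_max_left t 0)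
    have happ : (seg d r xh hxh (max t 0) - seg d r y hy (max t 0)) ⟨t - max t 0, hθ⟩
        = xh t - y t := by
      simp only [ContinuousMap.sub_apply, StmtAux.seg_apply, add_sub_cancel]
    have hpt : ‖xh t - y t‖ ≤ 1 := by
      rw [← happ]
      exact le_trans (ContinuousMap.norm_coe_le_norm _ _) hcl
    rw [hwdef]
    simp only [norm_smul, Real.norm_eq_abs, abs_of_pos (inv_pos.mpr hc)]
    calc c⁻¹ * ‖y t - xh t‖ = c⁻¹ * ‖xh t - y t‖ := by rw [norm_sub_rev]
      _ ≤ c⁻¹ * 1 := mul_le_mul_of_nonneg_left hpt (inv_pos.mpr hc).le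
      _ = c⁻¹ := mul_one _
  refine ⟨w, hw, ⟨c⁻¹, hwb⟩, ?_⟩
  intro t ht
  have hxd := hsol t ht
  have hyd' := hyder t ht
  have hder : HasDerivWithinAt w (c⁻¹ • (yd t - L t (seg d r xh hxh t))) (Set.Ici 0) t :=
    (hyd'.sub hxd).const_smul c⁻¹
  have hLeq : Lt t = L t := by rw [hLtdef]; simp [max_eq_left ht]
  have hzeq : zt t = z t := by rw [hztdef]; simp [max_eq_left ht]
  have hsegw : seg d r w hw t = c⁻¹ • (c • seg d r u hu t - seg d r xh hxh t) := by
    ext θ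
    simp only [hwdef, hydef, StmtAux.seg_apply, ContinuousMap.smul_apply,
      ContinuousMap.sub_apply]
  have heq : c⁻¹ • (yd t - L t (seg d r xh hxh t)) = L t (seg d r w hw t) + z t := by
    rw [hsegw, _root_.map_smul, map_sub, _root_.map_smul, hyddef]
    simp only [hLeq, hzeq, smul_sub, smul_add, smul_smul, inv_mul_cancel₀ hc.ne', one_smul]
    abel
  rw [← heq]
  exact hder


end
end

section
/- For each s ≥ 0, the stable subspace 𝒮(s) is subcomplete: it is the image of a Banach space under a bounded linear operator. Specifically, the set 𝓑' of bounded continuous solutions of x'(t) = L(t)x_t on [s,∞) is a closed subspace of the Banach space 𝓑 of bounded continuous functions [s−r,∞) → ℝ^d with supremum norm, and the map Φ : 𝓑' → C, Φ(x) = x_s, is a bounded linear operator with Φ(𝓑') = 𝒮(s). -/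
open Set

noncomputable section

section helpers
variable {d : ℕ} {r : ℝ}

lemma seg_congr {x y : ℝ → Rd d} (hx : Continuous x) (hy : Continuous y) (t : ℝ)
    (h : ∀ u, t - r ≤ u → u ≤ t → x u = y u) :
    seg d r x hx t = seg d r y hy t :=
  ContinuousMap.ext fun θ => h _ (by have := θ.2.1; linarith) (by have := θ.2.2; linarith)

lemma norm_apply_le_norm_seg (x : ℝ → Rd d) (hx : Continuous x) (t u : ℝ)
    (h1 : t - r ≤ u) (h2 : u ≤ t) : ‖x u‖ ≤ ‖seg d r x hx t‖ := by
  have : x u = (seg d r x hx t) ⟨u - t, by constructor <;> simp <;> linarith⟩ := by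
    simp [seg]
  rw [this]
  exact ContinuousMap.norm_coe_le_norm _ _

lemma norm_seg_le (x : ℝ → Rd d) (hx : Continuous x) (t M : ℝ) (hM : 0 ≤ M)
    (h : ∀ u, t - r ≤ u → u ≤ t → ‖x u‖ ≤ M) : ‖seg d r x hx t‖ ≤ M := by
  refine (ContinuousMap.norm_le _ hM).2 (fun θ => ?_)
  exact h _ (by have := θ.2.1; linarith) (by have := θ.2.2; linarith)

lemma dist_seg_le (x y : BoundedContinuousFunction ℝ (Rd d)) (t : ℝ) :
    dist (seg d r (⇑x) x.continuous t) (seg d r (⇑y) y.continuous t) ≤ dist x y := by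
  refine (ContinuousMap.dist_le dist_nonneg).2 (fun θ => ?_)
  exact BoundedContinuousFunction.dist_coe_le_dist _

lemma seg_eq_T (L : ℝ → (Ph d r →L[ℝ] Rd d)) (T : ℝ → ℝ → (Ph d r →L[ℝ] Ph d r))
    (hT : IsSolOp d r L T) (huniq : UniqueSol d r L)
    (s : ℝ) (hs : 0 ≤ s) (x : ℝ → Rd d) (hx : Continuous x)
    (hsol : IsSol d r L s x hx) :
    ∀ t, s ≤ t → seg d r x hx t = T t s (seg d r x hx s) := by
  obtain ⟨z, hz, hzsol, hzs, hzT⟩ := hT s hs (seg d r x hx s)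
  intro t ht
  rw [← hzT t ht]
  have heq := huniq s hs x z hx hz hsol hzsol hzs.symm
  exact seg_congr _ _ t (fun u h1 h2 => heq u (by linarith))

end helpers

set_option maxHeartbeats 1000000
set_option synthInstance.maxHeartbeats 400000

/-- For each s ≥ 0 the stable subspace 𝒮(s) is subcomplete: the set 𝓑' of
bounded continuous solutions of x'(t) = L(t)x_t on [s,∞) is a closed subspace of
the Banach space of bounded continuous functions with the supremum norm, and
the bounded linear operator Φ(x) = x_s maps 𝓑' onto 𝒮(s). -/


theorem stmt5 (d : ℕ) (r : ℝ) (hr : 0 ≤ r)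
    (L : ℝ → (Ph d r →L[ℝ] Rd d)) (hL : ContinuousOn L (Set.Ici 0))
    (T : ℝ → ℝ → (Ph d r →L[ℝ] Ph d r))
    (hT : IsSolOp d r L T) (hcoc : Cocycle d r T)
    (huniq : UniqueSol d r L) :
    ∀ s, 0 ≤ s →
      IsClosed {x : BoundedContinuousFunction ℝ (Rd d) | IsSol d r L s ⇑x x.continuous} ∧
      (∀ x y : BoundedContinuousFunction ℝ (Rd d),
        IsSol d r L s ⇑x x.continuous → IsSol d r L s ⇑y y.continuous →
          IsSol d r L s ⇑(x + y) (x + y).continuous) ∧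
      (∀ (c : ℝ) (x : BoundedContinuousFunction ℝ (Rd d)),
        IsSol d r L s ⇑x x.continuous → IsSol d r L s ⇑(c • x) (c • x).continuous) ∧
      ∃ Φ : BoundedContinuousFunction ℝ (Rd d) →L[ℝ] Ph d r,
        (∀ x : BoundedContinuousFunction ℝ (Rd d), Φ x = seg d r ⇑x x.continuous s) ∧
        ⇑Φ '' {x : BoundedContinuousFunction ℝ (Rd d) | IsSol d r L s ⇑x x.continuous} =
          (stableSub d r T s : Set (Ph d r)) := by
  intro s hs
  have h0 : (0:ℝ) ∈ Icc (-r) (0:ℝ) := ⟨by linarith, le_refl 0⟩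
  -- a function agreeing with a solution on [s-r,∞) is a solution
  have transfer : ∀ (x y : ℝ → Rd d) (hx : Continuous x) (hy : Continuous y),
      IsSol d r L s y hy → (∀ u, s - r ≤ u → x u = y u) → IsSol d r L s x hx := by
    intro x y hx hy hysol heq t ht
    have hseg : seg d r x hx t = seg d r y hy t :=
      seg_congr _ _ t (fun u h1 h2 => heq u (by linarith))
    rw [hseg]
    exact (hysol t ht).congr (fun u hu => heq u (by simp at hu; linarith))
      (heq t (by linarith))
  -- additivity of seg
  have seg_add : ∀ (x y : BoundedContinuousFunction ℝ (Rd d)) (t : ℝ),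
      seg d r (⇑(x + y)) (x + y).continuous t
        = seg d r (⇑x) x.continuous t + seg d r (⇑y) y.continuous t := by
    intro x y t; exact ContinuousMap.ext fun θ => rfl
  have seg_smul : ∀ (c : ℝ) (x : BoundedContinuousFunction ℝ (Rd d)) (t : ℝ),
      seg d r (⇑(c • x)) (c • x).continuous t
        = c • seg d r (⇑x) x.continuous t := by
    intro c x t; exact ContinuousMap.ext fun θ => rfl
  have key : ∀ (x : BoundedContinuousFunction ℝ (Rd d)),
      IsSol d r L s (⇑x) x.continuous →
      ∀ t, s ≤ t → seg d r (⇑x) x.continuous t = T t s (seg d r (⇑x) x.continuous s) :=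
    fun x hx => seg_eq_T L T hT huniq s hs (⇑x) x.continuous hx
  refine ⟨?_, ?_, ?_, ?_⟩
  · -- closedness
    apply IsSeqClosed.isClosed
    intro xs x hmem hlim
    -- segments of x satisfy the T relation
    have hseg : ∀ t, s ≤ t →
        seg d r (⇑x) x.continuous t = T t s (seg d r (⇑x) x.continuous s) := by
      intro t ht
      have hd : Filter.Tendsto (fun n => dist (xs n) x) Filter.atTop (nhds 0) :=
        tendsto_iff_dist_tendsto_zero.mp hlim
      have hconv : ∀ τ : ℝ, Filter.Tendsto (fun n => seg d r (⇑(xs n)) (xs n).continuous τ)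
          Filter.atTop (nhds (seg d r (⇑x) x.continuous τ)) := by
        intro τ
        refine tendsto_iff_dist_tendsto_zero.mpr ?_
        exact squeeze_zero (fun n => dist_nonneg) (fun n => dist_seg_le (xs n) x τ) hd
      have h1 := hconv t
      have h2 : Filter.Tendsto (fun n => T t s (seg d r (⇑(xs n)) (xs n).continuous s))
          Filter.atTop (nhds (T t s (seg d r (⇑x) x.continuous s))) :=
        ((T t s).continuous.tendsto _).comp (hconv s)
      have h3 : (fun n => seg d r (⇑(xs n)) (xs n).continuous t)
          = fun n => T t s (seg d r (⇑(xs n)) (xs n).continuous s) :=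
        funext fun n => key (xs n) (hmem n) t ht
      rw [h3] at h1
      exact tendsto_nhds_unique h1 h2
    obtain ⟨z, hz, hzsol, hzs, hzT⟩ := hT s hs (seg d r (⇑x) x.continuous s)
    refine transfer (⇑x) z x.continuous hz hzsol ?_
    intro u hu
    have ht : s ≤ max u s := le_max_right u s
    have hsegu : seg d r (⇑x) x.continuous (max u s) = seg d r z hz (max u s) := by
      rw [hseg (max u s) ht, ← hzT (max u s) ht]
    have harg : max u s + (u - max u s) = u := by ring
    have hmem2 : u - max u s ∈ Icc (-r) (0:ℝ) := by
      constructor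
      · rcases le_total u s with h | h
        · simp [max_eq_right h]; linarith
        · simp [max_eq_left h]; linarith
      · simp [le_max_left]
    have := congrFun (congrArg (fun f : Ph d r => (f : Icc (-r) (0:ℝ) → Rd d))
      hsegu) ⟨u - max u s, hmem2⟩
    simpa [seg, harg] using this
  · -- additivity
    intro x y hx hy t ht
    rw [seg_add, map_add]
    have := (hx t ht).add (hy t ht)
    exact this
  · -- scalar
    intro c x hx t ht
    rw [seg_smul, map_smul]
    have := (hx t ht).const_smul c
    exact this
  · -- the operator Φ
    refine ⟨LinearMap.mkContinuous
      { toFun := fun x => seg d r (⇑x) x.continuous s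
        map_add' := fun x y => seg_add x y s
        map_smul' := fun c x => seg_smul c x s } 1 (fun x => ?_), fun x => rfl, ?_⟩
    · rw [one_mul]
      exact norm_seg_le (⇑x) x.continuous s ‖x‖ (norm_nonneg x)
        (fun u _ _ => x.norm_coe_le_norm u)
    · ext φ
      simp only [Set.mem_image, LinearMap.mkContinuous_apply, LinearMap.coe_mk,
        AddHom.coe_mk, SetLike.mem_coe, Set.mem_setOf_eq]
      constructor
      · rintro ⟨x, hxsol, rfl⟩
        refine ⟨‖x‖, fun t ht => ?_⟩
        rw [← key x hxsol t ht]
        exact norm_seg_le (⇑x) x.continuous t ‖x‖ (norm_nonneg x) (fun u _ _ => x.norm_coe_le_norm u)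
      · rintro hφ
        obtain ⟨M, hM⟩ := hφ
        obtain ⟨z, hz, hzsol, hzs, hzT⟩ := hT s hs φ
        -- the truncated function
        set g : ℝ → Rd d := fun u => z (max u (s - r)) with hg
        have hgc : Continuous g := hz.comp (continuous_id.max continuous_const)
        have hMφ : ‖φ‖ ≤ M := by
          have := hM s (le_refl s)
          rwa [hcoc.1 s hs] at this
        have hM0 : 0 ≤ M := le_trans (norm_nonneg φ) hMφ
        have hbd : ∀ u, ‖g u‖ ≤ M := by
          intro u
          set v := max u (s - r) with hv
          have hv1 : s - r ≤ v := le_max_right _ _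
          set t := max v s with htd
          have ht1 : s ≤ t := le_max_right _ _
          have ht2 : t - r ≤ v := by
            rcases le_total v s with h | h
            · simp only [htd, max_eq_right h]; linarith
            · simp only [htd, max_eq_left h]; linarith
          have ht3 : v ≤ t := le_max_left _ _
          calc ‖g u‖ = ‖z v‖ := rfl
          _ ≤ ‖seg d r z hz t‖ := norm_apply_le_norm_seg z hz t v ht2 ht3
          _ = ‖T t s φ‖ := by rw [hzT t ht1]
          _ ≤ M := hM t ht1
        set X : BoundedContinuousFunction ℝ (Rd d) :=
          BoundedContinuousFunction.ofNormedAddCommGroup g hgc M hbd with hX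
        have hXz : ∀ u, s - r ≤ u → X u = z u := by
          intro u hu
          show g u = z u
          rw [hg]; simp [max_eq_left hu]
        refine ⟨X, transfer (⇑X) z X.continuous hz hzsol hXz, ?_⟩
        rw [← hzs]
        exact seg_congr _ _ s (fun u h1 h2 => hXz u (by linarith))

end
end

section
/- Let X be a Banach space and A : ℕ₀ → 𝓛(X), with transition operators U(n,m) = A(n−1)⋯A(m) for n > m and U(m,m) = Id. Suppose (Y(n))_{n∈ℕ₀} is a sequence of subspaces of X such that (i) each Y(n) is the image of a Banach space under a bounded linear operator (subcomplete), (ii) [A(n)]^{-1}(Y(n+1)) = Y(n) for all n (covariant), and (iii) U(n,0)X + Y(n) = X for all n (algebraically regular). If U(n,m) is compact for some n ≥ m, then every Y(n) is closed and all Y(n) have the same finite codimension in X. -/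
open Set

noncomputable section

/-- A Banach space `Z` together with a bounded linear operator into `X`. -/
structure BanachInto (X : Type*) [NormedAddCommGroup X] [NormedSpace ℝ X] where
  Z : Type
  [grp : NormedAddCommGroup Z]
  [mod : NormedSpace ℝ Z]
  [comp : CompleteSpace Z]
  Φ : Z →L[ℝ] X

attribute [instance] BanachInto.grp BanachInto.mod BanachInto.comp

/-- A subspace S of X is subcomplete if it is the image of a Banach space under
a bounded linear operator. -/
def Subcomplete {X : Type*} [NormedAddCommGroup X] [NormedSpace ℝ X] (S : Set X) : Prop :=
  ∃ B : BanachInto X, Set.range ⇑B.Φ = S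

open Filter Topology in
private lemma surj_of_almost {E F : Type*} [NormedAddCommGroup E] [NormedSpace ℝ E] [CompleteSpace E]
    [NormedAddCommGroup F] [NormedSpace ℝ F]
    (Ψ : E →L[ℝ] F) (C : ℝ)
    (h : ∀ x : F, ∃ e : E, ‖e‖ ≤ C * ‖x‖ ∧ ‖x - Ψ e‖ ≤ 2⁻¹ * ‖x‖) :
    Function.Surjective Ψ := by
  intro w
  let rem : ℕ → F := fun k => Nat.rec w (fun _ p => p - Ψ (Exists.choose (h p))) k
  have hrem0 : rem 0 = w := rfl
  have hremS : ∀ k, rem (k + 1) = rem k - Ψ (Exists.choose (h (rem k))) := fun k => rfl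
  let e : ℕ → E := fun k => Exists.choose (h (rem k))
  have he1 : ∀ k, ‖e k‖ ≤ C * ‖rem k‖ := fun k => (Exists.choose_spec (h (rem k))).1
  have he2 : ∀ k, ‖rem (k + 1)‖ ≤ 2⁻¹ * ‖rem k‖ := fun k => by
    rw [hremS]; exact (Exists.choose_spec (h (rem k))).2
  have hbound : ∀ k, ‖rem k‖ ≤ 2⁻¹ ^ k * ‖w‖ := by
    intro k
    induction k with
    | zero => simp [hrem0]
    | succ k ih =>
      calc ‖rem (k + 1)‖ ≤ 2⁻¹ * ‖rem k‖ := he2 k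
        _ ≤ 2⁻¹ * (2⁻¹ ^ k * ‖w‖) := by nlinarith [norm_nonneg (rem k)]
        _ = 2⁻¹ ^ (k + 1) * ‖w‖ := by ring
  have hsum : Summable e := by
    apply Summable.of_norm_bounded (g := fun k => (max C 0 * ‖w‖) * 2⁻¹ ^ k)
    · exact (summable_geometric_of_lt_one (by norm_num) (by norm_num)).mul_left _
    · intro k
      calc ‖e k‖ ≤ C * ‖rem k‖ := he1 k
        _ ≤ max C 0 * ‖rem k‖ := mul_le_mul_of_nonneg_right (le_max_left _ _) (norm_nonneg _)
        _ ≤ max C 0 * (2⁻¹ ^ k * ‖w‖) :=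
          mul_le_mul_of_nonneg_left (hbound k) (le_max_right _ _)
        _ = (max C 0 * ‖w‖) * 2⁻¹ ^ k := by ring
  obtain ⟨s, hs⟩ := hsum
  refine ⟨s, ?_⟩
  have hpartial : ∀ n, ∑ i ∈ Finset.range n, Ψ (e i) = w - rem n := by
    intro n
    induction n with
    | zero => simp [hrem0]
    | succ n ih =>
      rw [Finset.sum_range_succ, ih, hremS]
      abel
  have h1 : Tendsto (fun n => ∑ i ∈ Finset.range n, Ψ (e i)) atTop (𝓝 (Ψ s)) :=
    (hs.mapL Ψ).tendsto_sum_nat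
  have h2 : Tendsto rem atTop (𝓝 0) := by
    apply squeeze_zero_norm hbound
    have := tendsto_pow_atTop_nhds_zero_of_lt_one (by norm_num : (0:ℝ) ≤ 2⁻¹) (by norm_num)
    simpa using this.mul_const ‖w‖
  have h3 : Tendsto (fun n => w - rem n) atTop (𝓝 (w - 0)) :=
    tendsto_const_nhds.sub h2
  rw [sub_zero] at h3
  have := tendsto_nhds_unique h1 (by simpa only [hpartial] using h3)
  exact this.symm ▸ rfl

open Filter Topology in
private lemma main_closed_findim {X : Type*} [NormedAddCommGroup X] [NormedSpace ℝ X] [CompleteSpace X]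
    (V : X →L[ℝ] X) (hV : IsCompactOperator V)
    (S : Submodule ℝ X) (hsub : Subcomplete (S : Set X))
    (hreg : ∀ x : X, ∃ z : X, ∃ w ∈ S, x = V z + w) :
    IsClosed (S : Set X) ∧ FiniteDimensional ℝ (X ⧸ S) := by
  obtain ⟨B, hB⟩ := hsub
  have hmemS : ∀ z : B.Z, B.Φ z ∈ S := fun z => by
    have : B.Φ z ∈ Set.range ⇑B.Φ := ⟨z, rfl⟩
    rwa [hB] at this
  -- surjective operator T
  set T : (X × B.Z) →L[ℝ] X :=
    V.comp (ContinuousLinearMap.fst ℝ X B.Z) + B.Φ.comp (ContinuousLinearMap.snd ℝ X B.Z) with hT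
  have hTapp : ∀ p : X × B.Z, T p = V p.1 + B.Φ p.2 := fun p => rfl
  have hTsurj : Function.Surjective T := by
    intro x
    obtain ⟨z, w, hw, hx⟩ := hreg x
    have hw' : w ∈ Set.range ⇑B.Φ := by rw [hB]; exact hw
    obtain ⟨ζ, hζ⟩ := hw'
    exact ⟨(z, ζ), by rw [hTapp, hζ, ← hx]⟩
  obtain ⟨C, hCpos, hCs⟩ := T.exists_preimage_norm_le hTsurj
  -- finite 1/2-net of V(closedBall 0 C)
  have hcpt : IsCompact (closure (⇑V '' Metric.closedBall 0 C)) :=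
    hV.isCompact_closure_image_closedBall C
  have htb : TotallyBounded (⇑V '' Metric.closedBall 0 C) :=
    hcpt.totallyBounded.subset subset_closure
  obtain ⟨t, htfin, hcov⟩ := Metric.totallyBounded_iff.1 htb 2⁻¹ (by norm_num)
  set F₁ : Submodule ℝ X := Submodule.span ℝ t with hF₁
  haveI : FiniteDimensional ℝ F₁ := FiniteDimensional.span_of_finite ℝ htfin
  -- almost-surjective map Ψ
  set Ψ : (B.Z × F₁) →L[ℝ] X :=
    B.Φ.comp (ContinuousLinearMap.fst ℝ B.Z F₁) +
      F₁.subtypeL.comp (ContinuousLinearMap.snd ℝ B.Z F₁) with hΨ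
  have hΨapp : ∀ p : B.Z × F₁, Ψ p = B.Φ p.1 + (p.2 : X) := fun p => rfl
  have hΨsurj : Function.Surjective Ψ := by
    apply surj_of_almost Ψ (C + (‖V‖ * C + 2⁻¹))
    intro x
    rcases eq_or_ne x 0 with rfl | hx0
    · exact ⟨0, by simp⟩
    · have hxpos : 0 < ‖x‖ := norm_pos_iff.2 hx0
      set u : X := ‖x‖⁻¹ • x with hu
      have hun : ‖u‖ = 1 := by
        rw [hu, norm_smul, norm_inv, norm_norm, inv_mul_cancel₀ hxpos.ne']
      obtain ⟨p, hp, hpn⟩ := hCs u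
      rw [hun, mul_one] at hpn
      have hp1 : ‖p.1‖ ≤ C := le_trans (norm_fst_le p) hpn
      have hmem : V p.1 ∈ ⋃ y ∈ t, Metric.ball y 2⁻¹ :=
        hcov ⟨p.1, Metric.mem_closedBall.2 (by simpa using hp1), rfl⟩
      obtain ⟨y, hyt, hy⟩ := by simpa using hmem
      have hys : y ∈ F₁ := Submodule.subset_span hyt
      refine ⟨‖x‖ • (p.2, ⟨y, hys⟩), ?_, ?_⟩
      · have h2 : ‖p.2‖ ≤ C := le_trans (norm_snd_le p) hpn
        have hyn : ‖y‖ ≤ ‖V‖ * C + 2⁻¹ := by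
          have := mem_ball_iff_norm.1 hy
          have h3 : ‖V p.1‖ ≤ ‖V‖ * C := by
            calc ‖V p.1‖ ≤ ‖V‖ * ‖p.1‖ := V.le_opNorm p.1
              _ ≤ ‖V‖ * C := mul_le_mul_of_nonneg_left hp1 (norm_nonneg _)
          calc ‖y‖ ≤ ‖V p.1‖ + ‖y - V p.1‖ := by
                have := norm_add_le (V p.1) (y - V p.1); simpa using this
            _ ≤ ‖V‖ * C + 2⁻¹ := by
                have : ‖y - V p.1‖ ≤ 2⁻¹ := by
                  rw [norm_sub_rev]
                  exact le_of_lt (by simpa [dist_eq_norm] using hy)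
                linarith
        rw [norm_smul, norm_norm, mul_comm]
        apply mul_le_mul_of_nonneg_right _ (norm_nonneg x)
        rw [Prod.norm_def]
        apply max_le
        · have h4 : (0:ℝ) ≤ ‖V‖ * C := mul_nonneg (norm_nonneg _) hCpos.le
          calc ‖p.2‖ ≤ C := h2
            _ ≤ C + (‖V‖ * C + 2⁻¹) := by linarith
        · have h5 : ‖((p.2, (⟨y, hys⟩ : F₁)).2 : F₁)‖ = ‖y‖ := rfl
          rw [h5]
          linarith
      · have hΨval : Ψ (p.2, (⟨y, hys⟩ : F₁)) = B.Φ p.2 + y := rfl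
        rw [map_smul, hΨval]
        have hux : x = ‖x‖ • u := by
          rw [hu, smul_smul, mul_inv_cancel₀ hxpos.ne', one_smul]
        have hkey : u - (B.Φ p.2 + y) = V p.1 - y := by
          have hu2 : u = V p.1 + B.Φ p.2 := by rw [← hp, hTapp]
          rw [hu2]; abel
        calc ‖x - ‖x‖ • (B.Φ p.2 + y)‖ = ‖‖x‖ • (u - (B.Φ p.2 + y))‖ := by
              rw [smul_sub, ← hux]
          _ = ‖x‖ * ‖u - (B.Φ p.2 + y)‖ := by rw [norm_smul, norm_norm]
          _ = ‖x‖ * ‖V p.1 - y‖ := by rw [hkey]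
          _ ≤ ‖x‖ * 2⁻¹ := by
              apply mul_le_mul_of_nonneg_left _ (norm_nonneg x)
              exact le_of_lt (by simpa [dist_eq_norm] using hy)
          _ = 2⁻¹ * ‖x‖ := mul_comm _ _
  -- S ⊔ F₁ = ⊤
  have hsup : S ⊔ F₁ = ⊤ := by
    rw [Submodule.eq_top_iff']
    intro x
    obtain ⟨⟨z, f⟩, hzf⟩ := hΨsurj x
    rw [hΨapp] at hzf
    exact Submodule.mem_sup.2 ⟨B.Φ z, hmemS z, f, f.2, hzf⟩
  haveI hfd : FiniteDimensional ℝ (X ⧸ S) := by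
    have hsurj : Function.Surjective (S.mkQ.comp F₁.subtype) := by
      intro xq
      obtain ⟨x, rfl⟩ := S.mkQ_surjective xq
      have hx : x ∈ S ⊔ F₁ := hsup ▸ Submodule.mem_top
      obtain ⟨s, hs, f, hf, hsf⟩ := Submodule.mem_sup.1 hx
      refine ⟨⟨f, hf⟩, ?_⟩
      have : S.mkQ f = S.mkQ x := by
        rw [← hsf]
        simp [Submodule.Quotient.mk_add, (Submodule.Quotient.mk_eq_zero S).2 hs,
          Submodule.mkQ_apply]
      simpa using this
    exact Module.Finite.of_surjective (S.mkQ.comp F₁.subtype) hsurj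
  refine ⟨?_, hfd⟩
  -- closedness
  obtain ⟨q, hq⟩ := Submodule.exists_isCompl S
  haveI : FiniteDimensional ℝ q :=
    Module.Finite.equiv (Submodule.quotientEquivOfIsCompl S q hq)
  haveI : CompleteSpace q := FiniteDimensional.complete ℝ q
  set Ψ' : (B.Z × q) →L[ℝ] X :=
    B.Φ.comp (ContinuousLinearMap.fst ℝ B.Z q) +
      q.subtypeL.comp (ContinuousLinearMap.snd ℝ B.Z q) with hΨ'
  have hΨ'app : ∀ p : B.Z × q, Ψ' p = B.Φ p.1 + (p.2 : X) := fun p => rfl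
  have hΨ'surj : Function.Surjective Ψ' := by
    intro x
    have hx : x ∈ S ⊔ q := by rw [hq.sup_eq_top]; exact Submodule.mem_top
    obtain ⟨s, hs, f, hf, hsf⟩ := Submodule.mem_sup.1 hx
    have hs' : s ∈ Set.range ⇑B.Φ := by rw [hB]; exact hs
    obtain ⟨z, hz⟩ := hs'
    exact ⟨(z, ⟨f, hf⟩), by rw [hΨ'app, hz, hsf]⟩
  obtain ⟨C₂, hC₂pos, hC₂⟩ := Ψ'.exists_preimage_norm_le hΨ'surj
  rw [← closure_subset_iff_isClosed]
  intro x hx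
  have hseq : ∀ j : ℕ, ∃ s ∈ (S : Set X), ‖x - s‖ < (j + 1 : ℝ)⁻¹ := by
    intro j
    obtain ⟨s, hs, hdist⟩ := Metric.mem_closure_iff.1 hx ((j + 1 : ℝ)⁻¹) (by positivity)
    exact ⟨s, hs, by rwa [← dist_eq_norm]⟩
  choose s hsS hsd using hseq
  have hdec : ∀ j : ℕ, ∃ p : B.Z × q, Ψ' p = x - s j ∧ ‖p‖ ≤ C₂ * ‖x - s j‖ :=
    fun j => hC₂ (x - s j)
  choose p hpψ hpn using hdec
  have hxf : ∀ j, x - ((p j).2 : X) ∈ S := by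
    intro j
    have h' : x - s j = B.Φ (p j).1 + ((p j).2 : X) := by
      have := hpψ j; rw [hΨ'app] at this; exact this.symm
    have hx2 : x = B.Φ (p j).1 + ((p j).2 : X) + s j := eq_add_of_sub_eq h'
    have : x - ((p j).2 : X) = s j + B.Φ (p j).1 := by rw [hx2]; abel
    rw [this]
    exact S.add_mem (hsS j) (hmemS _)
  have hconst : ∀ j, (p j).2 = (p 0).2 := by
    intro j
    have hmem : ((p 0).2 : X) - ((p j).2 : X) ∈ S := by
      have h6 := S.sub_mem (hxf j) (hxf 0)
      have h7 : (x - ((p j).2 : X)) - (x - ((p 0).2 : X)) = ((p 0).2 : X) - ((p j).2 : X) := by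
        abel
      rwa [h7] at h6
    have hmemq : ((p 0).2 : X) - ((p j).2 : X) ∈ q := q.sub_mem (p 0).2.2 (p j).2.2
    have h8 : ((p 0).2 : X) - ((p j).2 : X) ∈ S ⊓ q := ⟨hmem, hmemq⟩
    rw [hq.inf_eq_bot] at h8
    have h9 : ((p 0).2 : X) - ((p j).2 : X) = 0 := by simpa using h8
    have h10 : ((p j).2 : X) = ((p 0).2 : X) := (sub_eq_zero.1 h9).symm
    exact Subtype.ext h10
  have hzero : ((p 0).2 : X) = 0 := by
    have hb : ∀ j : ℕ, ‖((p 0).2 : X)‖ ≤ C₂ * (j + 1 : ℝ)⁻¹ := by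
      intro j
      calc ‖((p 0).2 : X)‖ = ‖((p j).2 : X)‖ := by rw [hconst j]
        _ ≤ ‖p j‖ := norm_snd_le (p j)
        _ ≤ C₂ * ‖x - s j‖ := hpn j
        _ ≤ C₂ * (j + 1 : ℝ)⁻¹ := mul_le_mul_of_nonneg_left (le_of_lt (hsd j)) hC₂pos.le
    have htend : Filter.Tendsto (fun j : ℕ => C₂ * ((j : ℝ) + 1)⁻¹) Filter.atTop (nhds 0) := by
      have h0 := tendsto_one_div_add_atTop_nhds_zero_nat (𝕜 := ℝ)
      have := h0.const_mul C₂
      simpa [one_div, mul_comm] using this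
    have hle0 : ‖((p 0).2 : X)‖ ≤ 0 :=
      ge_of_tendsto htend (Filter.Eventually.of_forall hb)
    exact norm_le_zero_iff.1 hle0
  have := hxf 0
  rw [hzero, sub_zero] at this
  exact this

/-- Schäffer's lemma: a subcomplete algebraically regular covariant sequence of
subspaces for a sequence of operators whose transition operator is compact for
some n ≥ m consists of closed subspaces of constant finite codimension. -/
theorem stmt6 (X : Type*) [NormedAddCommGroup X] [NormedSpace ℝ X] [CompleteSpace X]
    (A : ℕ → (X →L[ℝ] X)) (U : ℕ → ℕ → (X →L[ℝ] X))
    (hU0 : ∀ m, U m m = ContinuousLinearMap.id ℝ X)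
    (hUsucc : ∀ n m, m ≤ n → U (n + 1) m = (A n).comp (U n m))
    (Y : ℕ → Submodule ℝ X)
    (hsub : ∀ n, Subcomplete (Y n : Set X))
    (hcov : ∀ n, (⇑(A n)) ⁻¹' (Y (n + 1) : Set X) = (Y n : Set X))
    (hreg : ∀ n, ∀ x : X, ∃ z : X, ∃ w ∈ Y n, x = U n 0 z + w)
    (hcpt : ∃ n m, m ≤ n ∧ IsCompactOperator (U n m)) :
    (∀ n, IsClosed (Y n : Set X)) ∧
    (∀ n, FiniteDimensional ℝ (X ⧸ Y n)) ∧
    (∀ n m, Module.finrank ℝ (X ⧸ Y n) = Module.finrank ℝ (X ⧸ Y m)) := by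
  obtain ⟨n₁, m₀, hm, hcm⟩ := hcpt
  -- compactness propagates
  have hUcomp : ∀ n, n₁ ≤ n → IsCompactOperator (U n m₀) := by
    intro n hn
    induction n, hn using Nat.le_induction with
    | base => exact hcm
    | succ n hn ih =>
      rw [hUsucc n m₀ (hm.trans hn)]
      have : IsCompactOperator (⇑(A n) ∘ ⇑(U n m₀)) := ih.continuous_comp (A n).continuous
      simpa [ContinuousLinearMap.coe_comp'] using this
  -- splitting of U n 0
  have hU0split : ∀ n, m₀ ≤ n → ∀ z, U n 0 z = U n m₀ (U m₀ 0 z) := by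
    intro n hn
    induction n, hn using Nat.le_induction with
    | base => intro z; rw [hU0 m₀]; rfl
    | succ n hn ih =>
      intro z
      rw [hUsucc n 0 (Nat.zero_le n), hUsucc n m₀ hn]
      simp only [ContinuousLinearMap.comp_apply]
      rw [← ih z]
  -- lemma A at large times
  have key : ∀ n, n₁ ≤ n → IsClosed (Y n : Set X) ∧ FiniteDimensional ℝ (X ⧸ Y n) := by
    intro n hn
    apply main_closed_findim (U n m₀) (hUcomp n hn) (Y n) (hsub n)
    intro x
    obtain ⟨z, w, hw, hx⟩ := hreg n x
    exact ⟨U m₀ 0 z, w, hw, by rw [hx, hU0split n (hm.trans hn) z]⟩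
  -- quotient equivalences
  have hle : ∀ n, Y n ≤ (Y (n + 1)).comap (A n : X →ₗ[ℝ] X) := by
    intro n x hx
    have : x ∈ (⇑(A n) ⁻¹' (Y (n + 1) : Set X)) := by rw [hcov n]; exact hx
    exact this
  have equiv : ∀ n, (X ⧸ Y n) ≃ₗ[ℝ] (X ⧸ Y (n + 1)) := by
    intro n
    refine LinearEquiv.ofBijective
      (Submodule.mapQ (Y n) (Y (n + 1)) (A n : X →ₗ[ℝ] X) (hle n)) ⟨?_, ?_⟩
    · intro a b hab
      obtain ⟨x, rfl⟩ := Submodule.Quotient.mk_surjective _ a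
      obtain ⟨y, rfl⟩ := Submodule.Quotient.mk_surjective _ b
      rw [Submodule.mapQ_apply, Submodule.mapQ_apply, Submodule.Quotient.eq] at hab
      rw [Submodule.Quotient.eq]
      have : A n (x - y) ∈ Y (n + 1) := by simpa using hab
      have : x - y ∈ (⇑(A n) ⁻¹' (Y (n + 1) : Set X)) := this
      rwa [hcov n] at this
    · intro b
      obtain ⟨x, rfl⟩ := Submodule.Quotient.mk_surjective _ b
      obtain ⟨z, w, hw, hx⟩ := hreg (n + 1) x
      refine ⟨Submodule.Quotient.mk (U n 0 z), ?_⟩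
      rw [Submodule.mapQ_apply]
      have h1 : (A n : X →ₗ[ℝ] X) (U n 0 z) = U (n + 1) 0 z := by
        rw [hUsucc n 0 (Nat.zero_le n)]; rfl
      rw [h1, Submodule.Quotient.eq]
      have : U (n + 1) 0 z - x = -w := by rw [hx]; abel
      rw [this]
      exact (Y (n + 1)).neg_mem hw
  -- descend
  have cpred : ∀ n, IsClosed (Y (n + 1) : Set X) → IsClosed (Y n : Set X) := by
    intro n h
    rw [← hcov n]
    exact h.preimage (A n).continuous
  have fpred : ∀ n, FiniteDimensional ℝ (X ⧸ Y (n + 1)) → FiniteDimensional ℝ (X ⧸ Y n) := by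
    intro n h
    exact Module.Finite.equiv (equiv n).symm
  have desc : ∀ j n, (IsClosed (Y (n + j) : Set X) ∧ FiniteDimensional ℝ (X ⧸ Y (n + j))) →
      IsClosed (Y n : Set X) ∧ FiniteDimensional ℝ (X ⧸ Y n) := by
    intro j
    induction j with
    | zero => intro n h; exact h
    | succ j ih =>
      intro n h
      have h' := ih (n + 1) (by rw [show n + 1 + j = n + (j + 1) by omega]; exact h)
      exact ⟨cpred n h'.1, fpred n h'.2⟩
  have all : ∀ n, IsClosed (Y n : Set X) ∧ FiniteDimensional ℝ (X ⧸ Y n) :=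
    fun n => desc n₁ n (key (n + n₁) (Nat.le_add_left _ _))
  refine ⟨fun n => (all n).1, fun n => (all n).2, ?_⟩
  have stepeq : ∀ n, Module.finrank ℝ (X ⧸ Y n) = Module.finrank ℝ (X ⧸ Y (n + 1)) :=
    fun n => (equiv n).finrank_eq
  have eq0 : ∀ n, Module.finrank ℝ (X ⧸ Y n) = Module.finrank ℝ (X ⧸ Y 0) := by
    intro n
    induction n with
    | zero => rfl
    | succ n ih => rw [← stepeq n, ih]
  exact fun n m => (eq0 n).trans (eq0 m).symm

end
end
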